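/- arXiv:1108.3829 — 7 statements merged into one kernel-verified Lean document; each statement's English description precedes it below -/
import Mathlib

section
/- Let λ > 0 and let Θ̂ be a graphical lasso solution at λ for S. Then for all vertices i, j ∈ {1,…,p}: i and j lie in the same connected component of the thresholded sample covariance graph G^(λ) if and only if i and j lie in the same connected component of the estimated concentration graph Ĝ^(λ). In particular, the vertex-partition induced by the connected components of G^(λ) is exactly equal to the vertex-partition induced by the connected components of Ĝ^(λ). -/
open Matrix

/-- The graphical lasso objective: `f(Θ) = -log det Θ + tr(AΘ) + λ ∑_{i,j} |Θ_ij|`. -/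
noncomputable def glassoObj {n : Type*} [Fintype n] [DecidableEq n]
    (lam : ℝ) (A Θ : Matrix n n ℝ) : ℝ :=
  -Real.log Θ.det + (A * Θ).trace + lam * ∑ i, ∑ j, |Θ i j|

/-- `Θ` is a graphical lasso solution at `lam` for `A`: it is (symmetric) positive definite and
minimizes the graphical lasso objective over all symmetric positive definite matrices.
(Over `ℝ`, `Matrix.PosDef` includes symmetry.) -/
def IsGlassoSol {n : Type*} [Fintype n] [DecidableEq n]
    (lam : ℝ) (A Θ : Matrix n n ℝ) : Prop :=
  Θ.PosDef ∧ ∀ Ψ : Matrix n n ℝ, Ψ.PosDef → glassoObj lam A Θ ≤ glassoObj lam A Ψ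

/-- The thresholded sample covariance graph: an edge between distinct `i, j` iff `|S i j| > lam`. -/
def covGraph {n : Type*} (lam : ℝ) (S : Matrix n n ℝ) : SimpleGraph n :=
  SimpleGraph.fromRel (fun i j => lam < |S i j|)

/-- The estimated concentration graph: an edge between distinct `i, j` iff `Θ i j ≠ 0`. -/
def concGraph {n : Type*} (Θ : Matrix n n ℝ) : SimpleGraph n :=
  SimpleGraph.fromRel (fun i j => Θ i j ≠ 0)

/-! ### Auxiliary machinery -/

namespace GlassoAux

open Matrix

set_option linter.unusedSectionVars false

variable {n : Type*} [Fintype n] [DecidableEq n]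

lemma herm_symm {m : Type*} {M : Matrix m m ℝ} (hM : M.IsHermitian) (i j : m) : M j i = M i j := by
  have := congrFun (congrFun hM.eq j) i
  simpa [Matrix.conjTranspose_apply] using this.symm

/-! #### Spectral facts -/

lemma trace_eq_sum_eigs {A : Matrix n n ℝ} (hA : A.IsHermitian) :
    A.trace = ∑ i, hA.eigenvalues i := by
  simpa using hA.trace_eq_sum_eigenvalues

lemma det_eq_prod_eigs {A : Matrix n n ℝ} (hA : A.IsHermitian) :
    A.det = ∏ i, hA.eigenvalues i := by
  simpa using hA.det_eq_prod_eigenvalues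

lemma eq_one_of_eigs_one {A : Matrix n n ℝ} (hA : A.IsHermitian)
    (h : ∀ i, hA.eigenvalues i = 1) : A = 1 := by
  have hd : Matrix.diagonal (RCLike.ofReal ∘ hA.eigenvalues) = (1 : Matrix n n ℝ) := by
    have : (RCLike.ofReal ∘ hA.eigenvalues : n → ℝ) = fun _ => 1 := funext fun i => by simp [h i]
    rw [this]
    exact Matrix.diagonal_one
  calc A = (hA.eigenvectorUnitary : Matrix n n ℝ) * Matrix.diagonal (RCLike.ofReal ∘ hA.eigenvalues)
      * (star hA.eigenvectorUnitary : Matrix n n ℝ) := by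
        conv_lhs => rw [hA.spectral_theorem]
        rfl
    _ = 1 := by
        rw [hd, Matrix.mul_one]
        exact (Matrix.mem_unitaryGroup_iff).mp hA.eigenvectorUnitary.2

lemma posDef_conj {B Q : Matrix n n ℝ} (hB : B.PosDef) (hQ : Q.IsHermitian)
    (hdet : IsUnit Q.det) : (Q * B * Q).PosDef := by
  have hQt : Qᵀ = Q := by
    have := hQ.eq
    rwa [Matrix.conjTranspose_eq_transpose_of_trivial] at this
  refine Matrix.PosDef.of_dotProduct_mulVec_pos ?_ ?_
  · show (Q * B * Q)ᴴ = _
    rw [Matrix.conjTranspose_mul, Matrix.conjTranspose_mul, hQ.eq, hB.1.eq, Matrix.mul_assoc]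
  · intro x hx
    have hy : Q *ᵥ x ≠ 0 := by
      have hinj := Matrix.mulVec_injective_iff_isUnit.mpr
        (Matrix.isUnit_iff_isUnit_det Q |>.mpr hdet)
      intro h0
      exact hx (hinj (by simpa using h0))
    have key : star x ⬝ᵥ (Q * B * Q) *ᵥ x = star (Q *ᵥ x) ⬝ᵥ B *ᵥ (Q *ᵥ x) := by
      simp only [star_trivial, ← Matrix.mulVec_mulVec]
      rw [dotProduct_mulVec x Q (B *ᵥ Q *ᵥ x), ← Matrix.mulVec_transpose, hQt]
    rw [key]
    exact hB.dotProduct_mulVec_pos hy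

open scoped MatrixOrder in
lemma posDef_sqrt' {A : Matrix n n ℝ} (hA : A.PosDef) : (CFC.sqrt A).PosDef := by
  set Q := CFC.sqrt A with hQdef
  have hps : Q.PosSemidef := (CFC.sqrt_nonneg A).posSemidef
  have hQQ : Q * Q = A := CFC.sqrt_mul_sqrt_self A hA.posSemidef.nonneg
  have hdet : Q.det ≠ 0 := by
    intro h0
    have : A.det = 0 := by rw [← hQQ, Matrix.det_mul, h0, zero_mul]
    exact hA.det_pos.ne' this
  refine .of_dotProduct_mulVec_pos hps.1 fun x hx => lt_of_le_of_ne (hps.dotProduct_mulVec_nonneg x) fun h0 => ?_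
  have hQx : Q *ᵥ x = 0 := (hps.dotProduct_mulVec_zero_iff x).mp h0.symm
  have hinj := Matrix.mulVec_injective_iff_isUnit.mpr
    (Matrix.isUnit_iff_isUnit_det Q |>.mpr (isUnit_iff_ne_zero.mpr hdet))
  exact hx (hinj (by simpa using hQx))

open scoped MatrixOrder in
/-- Tangent (first-order concavity) inequality for `log ∘ det` on positive definite
matrices, together with strictness when the two matrices differ. -/
lemma logdet_tangent {A B : Matrix n n ℝ} (hA : A.PosDef) (hB : B.PosDef) :
    Real.log B.det ≤ Real.log A.det + ((A⁻¹ * B).trace - Fintype.card n) ∧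
      (B ≠ A → Real.log B.det < Real.log A.det + ((A⁻¹ * B).trace - Fintype.card n)) := by
  classical
  set Q := CFC.sqrt A with hQdef
  have hQpd : Q.PosDef := posDef_sqrt' hA
  have hQQ : Q * Q = A := CFC.sqrt_mul_sqrt_self A hA.posSemidef.nonneg
  have hQdet : IsUnit Q.det := isUnit_iff_ne_zero.mpr hQpd.det_pos.ne'
  have hQipd : Q⁻¹.PosDef := hQpd.inv
  have hQidet : IsUnit Q⁻¹.det := isUnit_iff_ne_zero.mpr hQipd.det_pos.ne'
  set M := Q⁻¹ * B * Q⁻¹ with hMdef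
  have hMpd : M.PosDef := posDef_conj hB hQipd.1 hQidet
  have hdetQi : Q⁻¹.det = Q.det⁻¹ := by
    rw [Matrix.det_nonsing_inv, Ring.inverse_eq_inv']
  have hdetA : Q.det * Q.det = A.det := by rw [← Matrix.det_mul, hQQ]
  have hdetM : M.det = B.det / A.det := by
    rw [hMdef, Matrix.det_mul, Matrix.det_mul, hdetQi, ← hdetA]
    field_simp
  have hQiQi : Q⁻¹ * Q⁻¹ = A⁻¹ := by rw [← Matrix.mul_inv_rev, hQQ]
  have htrM : M.trace = (A⁻¹ * B).trace := by
    rw [hMdef, Matrix.trace_mul_comm, ← Matrix.mul_assoc, hQiQi]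
  set μ := hMpd.1.eigenvalues with hμ
  have hμpos : ∀ i, 0 < μ i := hMpd.eigenvalues_pos
  have hdetμ : M.det = ∏ i, μ i := det_eq_prod_eigs hMpd.1
  have htrμ : M.trace = ∑ i, μ i := trace_eq_sum_eigs hMpd.1
  have hlogdet : Real.log B.det - Real.log A.det = ∑ i, Real.log (μ i) := by
    rw [← Real.log_div hB.det_pos.ne' hA.det_pos.ne', ← hdetM, hdetμ]
    exact Real.log_prod fun i _ => (hμpos i).ne'
  have hcard : (Fintype.card n : ℝ) = ∑ _i : n, (1 : ℝ) := by simp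
  have hle : ∀ i, Real.log (μ i) ≤ μ i - 1 := fun i => Real.log_le_sub_one_of_pos (hμpos i)
  constructor
  · have : ∑ i, Real.log (μ i) ≤ ∑ i, (μ i - 1) := Finset.sum_le_sum fun i _ => hle i
    have h2 : ∑ i, (μ i - 1) = (A⁻¹ * B).trace - Fintype.card n := by
      rw [Finset.sum_sub_distrib, ← htrμ, htrM, hcard]
    linarith [hlogdet ▸ this, h2 ▸ this, hlogdet, h2]
  · intro hne
    have hM1 : M ≠ 1 := by
      intro h1
      apply hne
      have : B = Q * M * Q := by
        rw [hMdef]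
        have h1' : Q * (Q⁻¹ * B * Q⁻¹) * Q = (Q * Q⁻¹) * B * (Q⁻¹ * Q) := by
          simp only [Matrix.mul_assoc]
        rw [h1', Matrix.mul_nonsing_inv _ hQdet, Matrix.nonsing_inv_mul _ hQdet,
          Matrix.one_mul, Matrix.mul_one]
      rw [this, h1, Matrix.mul_one, hQQ]
    obtain ⟨i0, hi0⟩ : ∃ i, μ i ≠ 1 := by
      by_contra hall
      push_neg at hall
      exact hM1 (eq_one_of_eigs_one hMpd.1 hall)
    have hstrict : ∑ i, Real.log (μ i) < ∑ i, (μ i - 1) := by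
      refine Finset.sum_lt_sum (fun i _ => hle i) ⟨i0, Finset.mem_univ i0, ?_⟩
      have := Real.add_one_lt_exp (x := μ i0 - 1) (by intro h; apply hi0; linarith)
      calc Real.log (μ i0) < Real.log (Real.exp (μ i0 - 1)) := by
            apply Real.log_lt_log (hμpos i0); linarith
        _ = μ i0 - 1 := Real.log_exp _
    have h2 : ∑ i, (μ i - 1) = (A⁻¹ * B).trace - Fintype.card n := by
      rw [Finset.sum_sub_distrib, ← htrμ, htrM, hcard]
    linarith [hlogdet, h2, hstrict]

/-! #### Masking entries across classes of a map `c` -/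

/-- Zero out all entries of `M` connecting different classes of `c`. -/
def mask (c : n → n) (M : Matrix n n ℝ) : Matrix n n ℝ :=
  Matrix.of fun i j => if c i = c j then M i j else 0

lemma mask_apply (c : n → n) (M : Matrix n n ℝ) (i j : n) :
    mask c M i j = if c i = c j then M i j else 0 := rfl

lemma sum_ite_ite (a b : n) (u v w : ℝ) :
    ∑ k : n, (if a = k then u else 0) * (w * (if b = k then v else 0))
      = if a = b then u * w * v else 0 := by
  rw [Finset.sum_eq_single a]
  · by_cases h : a = b <;> simp [h, eq_comm] <;> ring
  · intro k _ hk
    simp [Ne.symm hk]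
  · simp

lemma mask_isHermitian {c : n → n} {M : Matrix n n ℝ} (hM : M.IsHermitian) :
    (mask c M).IsHermitian := by
  ext i j
  simp only [Matrix.conjTranspose_apply, mask_apply, star_trivial]
  by_cases h : c j = c i
  · rw [if_pos h, if_pos h.symm]
    have := congrFun (congrFun hM.eq i) j
    simpa [Matrix.conjTranspose_apply] using this
  · rw [if_neg h, if_neg fun hh => h hh.symm]

lemma mask_posDef {c : n → n} {M : Matrix n n ℝ} (hM : M.PosDef) :
    (mask c M).PosDef := by
  refine .of_dotProduct_mulVec_pos (mask_isHermitian hM.1) fun x hx => ?_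
  classical
  set y : n → n → ℝ := fun k i => if c i = k then x i else 0 with hy
  have lhs_eq : star x ⬝ᵥ (mask c M) *ᵥ x
      = ∑ i, ∑ j, (if c i = c j then x i * M i j * x j else 0) := by
    simp only [star_trivial, dotProduct, Matrix.mulVec, Finset.mul_sum, mask_apply]
    refine Finset.sum_congr rfl fun i _ => Finset.sum_congr rfl fun j _ => ?_
    by_cases h : c i = c j <;> simp [h] <;> ring
  have rhs_eq : ∑ k, star (y k) ⬝ᵥ M *ᵥ (y k)
      = ∑ i, ∑ j, (if c i = c j then x i * M i j * x j else 0) := by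
    simp only [star_trivial, dotProduct, Matrix.mulVec, Finset.mul_sum]
    rw [Finset.sum_comm]
    refine Finset.sum_congr rfl fun i _ => ?_
    rw [Finset.sum_comm]
    refine Finset.sum_congr rfl fun j _ => ?_
    simpa only [hy] using sum_ite_ite (c i) (c j) (x i) (x j) (M i j)
  rw [lhs_eq, ← rhs_eq]
  obtain ⟨i0, hi0⟩ : ∃ i, x i ≠ 0 := Function.ne_iff.mp hx
  refine Finset.sum_pos' (fun k _ => hM.posSemidef.dotProduct_mulVec_nonneg (y k)) ⟨c i0, Finset.mem_univ _, ?_⟩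
  refine hM.dotProduct_mulVec_pos ?_
  intro h0
  apply hi0
  have := congrFun h0 i0
  simpa [hy] using this

/-- The inverse of an invertible matrix supported on the classes of `c` is supported
on the classes of `c`. -/
lemma inv_support {c : n → n} {M : Matrix n n ℝ} (hdet : IsUnit M.det)
    (hsupp : ∀ i j, c i ≠ c j → M i j = 0) :
    ∀ i j, c i ≠ c j → M⁻¹ i j = 0 := by
  classical
  have hMN : M * mask c M⁻¹ = 1 := by
    ext i k
    rw [Matrix.mul_apply]
    by_cases h : c i = c k
    · have : ∀ j ∈ Finset.univ, M i j * mask c M⁻¹ j k = M i j * M⁻¹ j k := by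
        intro j _
        by_cases hj : c j = c k
        · rw [mask_apply, if_pos hj]
        · rw [hsupp i j (fun hh => hj (hh ▸ h)), zero_mul, zero_mul]
      rw [Finset.sum_congr rfl this, ← Matrix.mul_apply, Matrix.mul_nonsing_inv _ hdet]
    · have hik : i ≠ k := fun hh => h (hh ▸ rfl)
      have : ∀ j ∈ Finset.univ, M i j * mask c M⁻¹ j k = 0 := by
        intro j _
        by_cases hj : c j = c k
        · rw [hsupp i j (fun hh => h (hh.trans hj)), zero_mul]
        · rw [mask_apply, if_neg hj, mul_zero]
      rw [Finset.sum_congr rfl this, Finset.sum_const_zero, Matrix.one_apply_ne hik]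
  have hinv : M⁻¹ = mask c M⁻¹ := Matrix.inv_eq_right_inv hMN
  intro i j hij
  rw [hinv, mask_apply, if_neg hij]

lemma trace_mul_eq_zero_of_disjoint_support {c : n → n} {P D : Matrix n n ℝ}
    (hP : ∀ i j, c i ≠ c j → P i j = 0) (hD : ∀ i j, c i = c j → D i j = 0) :
    (P * D).trace = 0 := by
  rw [Matrix.trace]
  refine Finset.sum_eq_zero fun i _ => ?_
  rw [Matrix.diag_apply, Matrix.mul_apply]
  refine Finset.sum_eq_zero fun j _ => ?_
  by_cases h : c i = c j
  · rw [hD j i h.symm, mul_zero]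
  · rw [hP i j h, zero_mul]

/-- Generalized Fischer inequality for the masking operation, with equality case. -/
lemma det_le_det_mask {c : n → n} {M : Matrix n n ℝ} (hM : M.PosDef) :
    M.det ≤ (mask c M).det ∧ (M ≠ mask c M → M.det < (mask c M).det) := by
  classical
  set A := mask c M with hA
  have hApd : A.PosDef := mask_posDef hM
  have hAsupp : ∀ i j, c i ≠ c j → A i j = 0 := fun i j h => by
    rw [hA, mask_apply, if_neg h]
  have hAdet : IsUnit A.det := isUnit_iff_ne_zero.mpr hApd.det_pos.ne'
  have hAinv := inv_support hAdet hAsupp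
  have htr : (A⁻¹ * M).trace = Fintype.card n := by
    have hMdecomp : M = A + (M - A) := (add_sub_cancel A M).symm
    have h2 : (A⁻¹ * (M - A)).trace = 0 := by
      refine trace_mul_eq_zero_of_disjoint_support hAinv fun i j h => ?_
      simp [hA, mask_apply, if_pos h, Matrix.sub_apply]
    calc (A⁻¹ * M).trace = (A⁻¹ * A + A⁻¹ * (M - A)).trace := by
          rw [← Matrix.mul_add, ← hMdecomp]
      _ = (A⁻¹ * A).trace + (A⁻¹ * (M - A)).trace := Matrix.trace_add _ _
      _ = Fintype.card n := by
          rw [h2, Matrix.nonsing_inv_mul _ hAdet, add_zero, Matrix.trace_one]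
  obtain ⟨hle, hlt⟩ := logdet_tangent hApd hM
  rw [htr] at hle hlt
  simp only [sub_self, add_zero] at hle hlt
  constructor
  · exact (Real.log_le_log_iff hM.det_pos hApd.det_pos).mp hle
  · intro hne
    exact (Real.log_lt_log_iff hM.det_pos hApd.det_pos).mp (hlt hne)

/-! #### Symmetric elementary perturbations -/

/-- Symmetric elementary matrix with ones at `(a,b)` and `(b,a)`. -/
def pert (a b : n) : Matrix n n ℝ :=
  Matrix.of fun k l => (if k = a ∧ l = b then (1:ℝ) else 0) + (if k = b ∧ l = a then 1 else 0)

lemma pert_apply (a b k l : n) : pert a b k l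
    = (if k = a ∧ l = b then (1:ℝ) else 0) + (if k = b ∧ l = a then 1 else 0) := rfl

lemma dsum_ite (f : n → n → ℝ) (a b : n) :
    ∑ k, ∑ l, (if k = a ∧ l = b then f k l else 0) = f a b := by
  rw [Finset.sum_eq_single a]
  · rw [Finset.sum_eq_single b]
    · simp
    · intro l _ hl; simp [hl]
    · simp
  · intro k _ hk; exact Finset.sum_eq_zero fun l _ => by simp [hk]
  · simp

lemma dsum_ite' (f : n → n → ℝ) (a b : n) :
    ∑ i, ∑ j, (if j = a ∧ i = b then f i j else 0) = f b a := by
  rw [Finset.sum_eq_single b]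
  · rw [Finset.sum_eq_single a]
    · simp
    · intro l _ hl; simp [hl]
    · simp
  · intro k _ hk; exact Finset.sum_eq_zero fun l _ => by simp [hk]
  · simp

lemma pert_isHermitian (a b : n) : (pert a b).IsHermitian := by
  ext k l
  simp only [Matrix.conjTranspose_apply, pert_apply, star_trivial]
  have h1 : (if l = a ∧ k = b then (1:ℝ) else 0) = (if k = b ∧ l = a then 1 else 0) :=
    if_congr and_comm rfl rfl
  have h2 : (if l = b ∧ k = a then (1:ℝ) else 0) = (if k = a ∧ l = b then 1 else 0) :=
    if_congr and_comm rfl rfl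
  rw [h1, h2, add_comm]

lemma pert_quad (a b : n) (x : n → ℝ) :
    x ⬝ᵥ (pert a b) *ᵥ x = x a * x b + x b * x a := by
  have : x ⬝ᵥ (pert a b) *ᵥ x
      = (∑ k, ∑ l, (if k = a ∧ l = b then x k * x l else 0))
        + ∑ k, ∑ l, (if k = b ∧ l = a then x k * x l else 0) := by
    simp only [dotProduct, Matrix.mulVec, Finset.mul_sum, pert_apply]
    rw [← Finset.sum_add_distrib]
    refine Finset.sum_congr rfl fun k _ => ?_
    rw [← Finset.sum_add_distrib]
    refine Finset.sum_congr rfl fun l _ => ?_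
    have hsplit : ∀ (c : Prop) [Decidable c] (u v : ℝ),
        u * ((if c then (1:ℝ) else 0) * v) = (if c then u * v else 0) := by
      intro c _ u v; by_cases h : c <;> simp [h]
    rw [add_mul, mul_add, hsplit, hsplit]
  rw [this, dsum_ite (fun k l => x k * x l) a b, dsum_ite (fun k l => x k * x l) b a]

lemma trace_mul_pert (M : Matrix n n ℝ) (a b : n) :
    (M * pert a b).trace = M b a + M a b := by
  have : (M * pert a b).trace
      = (∑ i, ∑ j, (if j = a ∧ i = b then M i j else 0))
        + ∑ i, ∑ j, (if j = b ∧ i = a then M i j else 0) := by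
    rw [Matrix.trace]
    simp only [Matrix.diag_apply, Matrix.mul_apply, pert_apply]
    rw [← Finset.sum_add_distrib]
    refine Finset.sum_congr rfl fun i _ => ?_
    rw [← Finset.sum_add_distrib]
    refine Finset.sum_congr rfl fun j _ => ?_
    have hsplit : ∀ (c : Prop) [Decidable c] (u : ℝ),
        u * (if c then (1:ℝ) else 0) = (if c then u else 0) := by
      intro c _ u; by_cases h : c <;> simp [h]
    rw [mul_add, hsplit, hsplit]
  rw [this, dsum_ite' M a b, dsum_ite' M b a]

lemma dot_self_pos {x : n → ℝ} (hx : x ≠ 0) : 0 < x ⬝ᵥ x := by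
  obtain ⟨i0, hi0⟩ := Function.ne_iff.mp hx
  rw [dotProduct]
  refine Finset.sum_pos' (fun k _ => mul_self_nonneg _) ⟨i0, Finset.mem_univ _, ?_⟩
  exact mul_self_pos.mpr hi0

/-- Uniform lower bound on the quadratic form of a positive definite matrix. -/
lemma posdef_lower [Nonempty n] {T : Matrix n n ℝ} (hT : T.PosDef) :
    ∃ cm > 0, ∀ x : n → ℝ, cm * (x ⬝ᵥ x) ≤ x ⬝ᵥ T *ᵥ x := by
  classical
  set μ := hT.1.eigenvalues with hμ
  obtain ⟨k0, -, hk0⟩ :=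
    Finset.exists_min_image Finset.univ μ ⟨Classical.arbitrary n, Finset.mem_univ _⟩
  refine ⟨μ k0, hT.eigenvalues_pos k0, fun x => ?_⟩
  set U : Matrix n n ℝ := (hT.1.eigenvectorUnitary : Matrix n n ℝ) with hU
  have hUU : U * (star U) = 1 := (Matrix.mem_unitaryGroup_iff).mp hT.1.eigenvectorUnitary.2
  set y : n → ℝ := (star U) *ᵥ x with hy
  have hxy : ∀ (d : n → ℝ), x ⬝ᵥ (U * Matrix.diagonal d * star U) *ᵥ x
      = ∑ k, d k * (y k * y k) := by
    intro d
    rw [← Matrix.mulVec_mulVec, ← Matrix.mulVec_mulVec]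
    rw [dotProduct_mulVec x U _]
    have hxU : x ᵥ* U = y := by
      rw [hy, ← Matrix.mulVec_transpose, Matrix.star_eq_conjTranspose,
        Matrix.conjTranspose_eq_transpose_of_trivial]
    rw [hxU]
    simp [dotProduct, Matrix.mulVec_diagonal, mul_comm, mul_assoc, mul_left_comm, ← hy]
  have hform : x ⬝ᵥ T *ᵥ x = ∑ k, μ k * (y k * y k) := by
    nth_rewrite 1 [hT.1.spectral_theorem]
    simpa [Unitary.conjStarAlgAut_apply] using hxy (μ)
  have hnorm : x ⬝ᵥ x = ∑ k, y k * y k := by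
    have h1 : x ⬝ᵥ (U * Matrix.diagonal (fun _ => (1:ℝ)) * star U) *ᵥ x = ∑ k, y k * y k := by
      simpa using hxy (fun _ => 1)
    rw [← h1]
    congr 1
    rw [Matrix.diagonal_one, Matrix.mul_one, hUU, Matrix.one_mulVec]
  rw [hform, hnorm, Finset.mul_sum]
  refine Finset.sum_le_sum fun k _ => ?_
  have : 0 ≤ y k * y k := mul_self_nonneg _
  nlinarith [hk0 k (Finset.mem_univ k)]

lemma pert_posDef {T : Matrix n n ℝ} (hT : T.PosDef) {a b : n} (hab : a ≠ b)
    {cm : ℝ} (hlow : ∀ x : n → ℝ, cm * (x ⬝ᵥ x) ≤ x ⬝ᵥ T *ᵥ x)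
    {t : ℝ} (ht : |t| < cm) : (T + t • pert a b).PosDef := by
  have hE : (t • pert a b).IsHermitian := by
    show (t • pert a b)ᴴ = _
    rw [Matrix.conjTranspose_smul, (pert_isHermitian a b).eq, star_trivial]
  refine .of_dotProduct_mulVec_pos (hT.1.add hE) fun x hx => ?_
  have hquad : star x ⬝ᵥ (T + t • pert a b) *ᵥ x
      = x ⬝ᵥ T *ᵥ x + t * (x a * x b + x b * x a) := by
    simp only [star_trivial, Matrix.add_mulVec, dotProduct_add, Matrix.smul_mulVec,
      dotProduct_smul, smul_eq_mul]
    rw [pert_quad]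
  rw [hquad]
  have hdot : 0 < x ⬝ᵥ x := dot_self_pos hx
  have hsq : x a * x a + x b * x b ≤ x ⬝ᵥ x := by
    rw [dotProduct]
    have : ({a, b} : Finset n) ⊆ Finset.univ := Finset.subset_univ _
    calc x a * x a + x b * x b = ∑ k ∈ ({a, b} : Finset n), x k * x k := by
          rw [Finset.sum_pair hab]
      _ ≤ ∑ k, x k * x k :=
          Finset.sum_le_sum_of_subset_of_nonneg this fun k _ _ => mul_self_nonneg _
  have habs : |t * (x a * x b + x b * x a)| ≤ |t| * (x ⬝ᵥ x) := by
    rw [abs_mul]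
    refine mul_le_mul_of_nonneg_left ?_ (abs_nonneg t)
    have h1 : |x a * x b + x b * x a| ≤ x a * x a + x b * x b := by
      have e1 : x a * x b + x b * x a = 2 * (x a * x b) := by ring
      rw [e1, abs_mul, abs_two, abs_mul]
      nlinarith [sq_nonneg (|x a| - |x b|), abs_mul_abs_self (x a), abs_mul_abs_self (x b),
        abs_nonneg (x a), abs_nonneg (x b)]
    linarith
  have := hlow x
  have h2 : t * (x a * x b + x b * x a) ≥ -(|t| * (x ⬝ᵥ x)) := neg_le_of_abs_le habs
  nlinarith

lemma l1_pert {T : Matrix n n ℝ} {a b : n} (hab : a ≠ b) (hTab : T a b = 0) (hTba : T b a = 0)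
    (t : ℝ) :
    ∑ k, ∑ l, |(T + t • pert a b) k l| = (∑ k, ∑ l, |T k l|) + 2 * |t| := by
  have key : ∀ k l, |(T + t • pert a b) k l|
      = |T k l| + ((if k = a ∧ l = b then |t| else 0) + (if k = b ∧ l = a then |t| else 0)) := by
    intro k l
    have hadd : (T + t • pert a b) k l = T k l + t * pert a b k l := by
      simp [Matrix.add_apply]
    rw [hadd, pert_apply]
    by_cases h1 : k = a ∧ l = b
    · have h2 : ¬(k = b ∧ l = a) := fun h => hab (h1.1.symm.trans h.1)
      rw [if_pos h1, if_pos h1, if_neg h2, if_neg h2, h1.1, h1.2, hTab]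
      simp
    · by_cases h2 : k = b ∧ l = a
      · rw [if_neg h1, if_neg h1, if_pos h2, if_pos h2, h2.1, h2.2, hTba]
        simp
      · rw [if_neg h1, if_neg h1, if_neg h2, if_neg h2]
        simp
  simp only [key]
  simp only [Finset.sum_add_distrib]
  rw [dsum_ite (fun _ _ => |t|) a b, dsum_ite (fun _ _ => |t|) b a]
  ring

/-! #### Continuity of inverse entries -/

lemma inv_entry_tendsto (T E : Matrix n n ℝ) (hdet : T.det ≠ 0) (a b : n) :
    Filter.Tendsto (fun t : ℝ => (T + t • E)⁻¹ a b) (nhds 0) (nhds (T⁻¹ a b)) := by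
  have hΨ : Continuous fun t : ℝ => T + t • E := by
    apply continuous_matrix
    intro i j
    simp only [Matrix.add_apply, Matrix.smul_apply, smul_eq_mul]
    fun_prop
  have hdetc : Continuous fun t : ℝ => (T + t • E).det := hΨ.matrix_det
  have hadjc : Continuous fun t : ℝ => (T + t • E).adjugate a b :=
    (continuous_apply b).comp ((continuous_apply a).comp hΨ.matrix_adjugate)
  have hform : ∀ t : ℝ, (T + t • E)⁻¹ a b = ((T + t • E).det)⁻¹ * (T + t • E).adjugate a b := by
    intro t
    rw [Matrix.inv_def, Ring.inverse_eq_inv']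
    simp [Matrix.smul_apply, smul_eq_mul]
  simp only [hform]
  have h0 : T⁻¹ a b = (T.det)⁻¹ * T.adjugate a b := by
    rw [Matrix.inv_def, Ring.inverse_eq_inv']
    simp [Matrix.smul_apply, smul_eq_mul]
  rw [h0]
  refine Filter.Tendsto.mul ?_ ?_
  · have h1 := (hdetc.tendsto 0)
    have h2 : (T + (0:ℝ) • E).det = T.det := by simp
    rw [h2] at h1
    exact (Filter.Tendsto.inv₀ h1 hdet)
  · have := (hadjc.tendsto 0)
    simpa using this

/-! #### Graph lemmas -/

lemma reachable_of_edge_reachable {V : Type*} {G H : SimpleGraph V}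
    (h : ∀ a b, G.Adj a b → H.Reachable a b) {i j : V} (hr : G.Reachable i j) :
    H.Reachable i j := by
  obtain ⟨w⟩ := hr
  induction w with
  | nil => exact SimpleGraph.Reachable.refl _
  | cons ha _ ih => exact (h _ _ ha).trans ih

lemma out_eq_iff_reachable {V : Type*} (G : SimpleGraph V) (a b : V) :
    (Quot.out (G.connectedComponentMk a) = Quot.out (G.connectedComponentMk b))
      ↔ G.Reachable a b := by
  rw [← SimpleGraph.ConnectedComponent.eq]
  constructor
  · intro h
    have := congrArg G.connectedComponentMk h
    have e1 : G.connectedComponentMk (Quot.out (G.connectedComponentMk a))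
        = G.connectedComponentMk a := Quot.out_eq _
    have e2 : G.connectedComponentMk (Quot.out (G.connectedComponentMk b))
        = G.connectedComponentMk b := Quot.out_eq _
    rwa [e1, e2] at this
  · intro h
    rw [h]

lemma trace_mul_expand (S M : Matrix n n ℝ) : (S * M).trace = ∑ i, ∑ j, S i j * M j i := by
  rw [Matrix.trace]
  simp only [Matrix.diag_apply, Matrix.mul_apply]

lemma dsum_add (f g : n → n → ℝ) :
    (∑ i, ∑ j, f i j) + (∑ i, ∑ j, g i j) = ∑ i, ∑ j, (f i j + g i j) := by
  rw [← Finset.sum_add_distrib]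
  exact Finset.sum_congr rfl fun i _ => (Finset.sum_add_distrib).symm

end GlassoAux

/-- the connected components of the thresholded sample covariance graph and of the
estimated concentration graph induce exactly the same vertex partition. -/
theorem glasso_thresholding_component_equivalence
    (p : ℕ) (hp : 1 ≤ p) (S : Matrix (Fin p) (Fin p) ℝ) (hS : S.PosSemidef)
    (lam : ℝ) (hlam : 0 < lam)
    (Θ : Matrix (Fin p) (Fin p) ℝ) (hΘ : IsGlassoSol lam S Θ) :
    ∀ i j : Fin p,
      (covGraph lam S).Reachable i j ↔ (concGraph Θ).Reachable i j := by
  classical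
  open GlassoAux in
  obtain ⟨hTpd, hmin⟩ := hΘ
  have hTsym : ∀ a b : Fin p, Θ b a = Θ a b := GlassoAux.herm_symm hTpd.1
  have hSsym : ∀ a b : Fin p, S b a = S a b := GlassoAux.herm_symm hS.1
  have hn : Nonempty (Fin p) := ⟨⟨0, hp⟩⟩
  have hdetT : IsUnit Θ.det := isUnit_iff_ne_zero.mpr hTpd.det_pos.ne'
  -- Part A : Θ is supported on the connected components of the covariance graph.
  set c : Fin p → Fin p := fun i => Quot.out ((covGraph lam S).connectedComponentMk i) with hcdef
  have hc : ∀ a b : Fin p, c a = c b ↔ (covGraph lam S).Reachable a b := fun a b =>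
    GlassoAux.out_eq_iff_reachable (covGraph lam S) a b
  have hcS : ∀ i j : Fin p, c i ≠ c j → |S i j| ≤ lam := by
    intro i j hij
    have hne : i ≠ j := fun h => hij (h ▸ rfl)
    have hnadj : ¬ (covGraph lam S).Adj i j := fun hadj => hij ((hc i j).mpr hadj.reachable)
    rw [covGraph, SimpleGraph.fromRel_adj] at hnadj
    push_neg at hnadj
    exact (hnadj hne).1
  have hTmask : Θ = GlassoAux.mask c Θ := by
    by_contra hne
    have hmaskpd : (GlassoAux.mask c Θ).PosDef := GlassoAux.mask_posDef hTpd
    have hdetlt : Θ.det < (GlassoAux.mask c Θ).det := (GlassoAux.det_le_det_mask hTpd).2 hne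
    have hobj : glassoObj lam S (GlassoAux.mask c Θ) < glassoObj lam S Θ := by
      have hlog : -Real.log (GlassoAux.mask c Θ).det < -Real.log Θ.det := by
        have := Real.log_lt_log hTpd.det_pos hdetlt
        linarith
      have hkey : ∀ i j : Fin p,
          S i j * (GlassoAux.mask c Θ) j i + lam * |(GlassoAux.mask c Θ) i j|
            ≤ S i j * Θ j i + lam * |Θ i j| := by
        intro i j
        by_cases hcc : c i = c j
        · rw [GlassoAux.mask_apply, GlassoAux.mask_apply, if_pos hcc, if_pos hcc.symm]
        · rw [GlassoAux.mask_apply, GlassoAux.mask_apply, if_neg hcc,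
            if_neg (fun h => hcc h.symm)]
          simp only [mul_zero, abs_zero, add_zero]
          rw [hTsym i j]
          have h1 : |S i j * Θ i j| ≤ lam * |Θ i j| := by
            rw [abs_mul]
            exact mul_le_mul_of_nonneg_right (hcS i j hcc) (abs_nonneg _)
          linarith [neg_abs_le (S i j * Θ i j)]
      have hrest : (S * GlassoAux.mask c Θ).trace + lam * ∑ i, ∑ j, |GlassoAux.mask c Θ i j|
          ≤ (S * Θ).trace + lam * ∑ i, ∑ j, |Θ i j| := by
        rw [GlassoAux.trace_mul_expand, GlassoAux.trace_mul_expand]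
        simp only [Finset.mul_sum]
        rw [GlassoAux.dsum_add, GlassoAux.dsum_add]
        exact Finset.sum_le_sum fun i _ => Finset.sum_le_sum fun j _ => hkey i j
      simp only [glassoObj]
      linarith
    exact absurd (hmin _ hmaskpd) (not_le.mpr hobj)
  have hAedge : ∀ a b : Fin p, (concGraph Θ).Adj a b → (covGraph lam S).Reachable a b := by
    intro a b hab
    rw [concGraph, SimpleGraph.fromRel_adj] at hab
    obtain ⟨hne, h⟩ := hab
    have hth : Θ a b ≠ 0 := by
      rcases h with h | h
      · exact h
      · rw [hTsym b a]; exact h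
    have hcc : c a = c b := by
      by_contra hcc
      apply hth
      have := congrFun (congrFun hTmask a) b
      rwa [GlassoAux.mask_apply, if_neg hcc] at this
    exact (hc a b).mp hcc
  -- Part B : covariance edges stay within concentration components (via KKT conditions).
  set c' : Fin p → Fin p := fun i => Quot.out ((concGraph Θ).connectedComponentMk i) with hc'def
  have hc' : ∀ a b : Fin p, c' a = c' b ↔ (concGraph Θ).Reachable a b := fun a b =>
    GlassoAux.out_eq_iff_reachable (concGraph Θ) a b
  have hsupp' : ∀ a b : Fin p, c' a ≠ c' b → Θ a b = 0 := by
    intro a b h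
    by_contra hθ
    have hne : a ≠ b := fun hh => h (hh ▸ rfl)
    exact h ((hc' a b).mpr (SimpleGraph.Adj.reachable
      (by rw [concGraph, SimpleGraph.fromRel_adj]; exact ⟨hne, Or.inl hθ⟩)))
  have hWsupp := GlassoAux.inv_support hdetT hsupp'
  have hBedge : ∀ a b : Fin p, (covGraph lam S).Adj a b → (concGraph Θ).Reachable a b := by
    intro a b hab
    by_contra hnr
    rw [covGraph, SimpleGraph.fromRel_adj] at hab
    obtain ⟨hne, habs⟩ := hab
    have hSab : lam < |S a b| := by
      rcases habs with h | h
      · exact h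
      · rwa [hSsym a b] at h
    have hcc : c' a ≠ c' b := fun h => hnr ((hc' a b).mp h)
    have hT0 : Θ a b = 0 := hsupp' a b hcc
    have hT0' : Θ b a = 0 := hsupp' b a fun h => hcc h.symm
    have hW0 : Θ⁻¹ a b = 0 := hWsupp a b hcc
    have hW0' : Θ⁻¹ b a = 0 := hWsupp b a fun h => hcc h.symm
    obtain ⟨cm, hcm, hlow⟩ := GlassoAux.posdef_lower hTpd
    -- the key first-order inequality from minimality
    have key : ∀ t : ℝ, |t| < cm →
        0 ≤ -(t * ((Θ + t • GlassoAux.pert a b)⁻¹ a b + (Θ + t • GlassoAux.pert a b)⁻¹ b a))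
          + 2 * t * S a b + lam * (2 * |t|) := by
      intro t htcm
      set Ψ := Θ + t • GlassoAux.pert a b with hΨdef
      have hΨpd : Ψ.PosDef := GlassoAux.pert_posDef hTpd hne hlow htcm
      have hΨdet : IsUnit Ψ.det := isUnit_iff_ne_zero.mpr hΨpd.det_pos.ne'
      have hminΨ := hmin Ψ hΨpd
      have htr : (S * Ψ).trace = (S * Θ).trace + t * (S b a + S a b) := by
        rw [hΨdef, Matrix.mul_add, Matrix.trace_add, Matrix.mul_smul, Matrix.trace_smul,
          GlassoAux.trace_mul_pert]
        simp [smul_eq_mul]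
      have hl1 : ∑ k, ∑ l, |Ψ k l| = (∑ k, ∑ l, |Θ k l|) + 2 * |t| :=
        GlassoAux.l1_pert hne hT0 hT0' t
      have htan := (GlassoAux.logdet_tangent hΨpd hTpd).1
      have htrinv : (Ψ⁻¹ * Θ).trace
          = (Fintype.card (Fin p) : ℝ) - t * (Ψ⁻¹ b a + Ψ⁻¹ a b) := by
        have hθdecomp : Θ = Ψ - t • GlassoAux.pert a b := by
          rw [hΨdef]
          abel
        rw [hθdecomp, Matrix.mul_sub, Matrix.trace_sub, Matrix.nonsing_inv_mul _ hΨdet,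
          Matrix.trace_one, Matrix.mul_smul, Matrix.trace_smul, GlassoAux.trace_mul_pert]
        simp only [smul_eq_mul]
      rw [htrinv] at htan
      simp only [glassoObj] at hminΨ
      rw [htr, hl1] at hminΨ
      have hSba : S b a = S a b := hSsym a b
      have e1 : t * (S b a + S a b) = 2 * t * S a b := by rw [hSba]; ring
      have e2 : lam * ((∑ k, ∑ l, |Θ k l|) + 2 * |t|)
          = lam * (∑ k, ∑ l, |Θ k l|) + lam * (2 * |t|) := by ring
      have e3 : t * (Ψ⁻¹ b a + Ψ⁻¹ a b) = t * (Ψ⁻¹ a b + Ψ⁻¹ b a) := by ring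
      linarith [htan, hminΨ, e1, e2, e3]
    -- pass to the limit t → 0 to contradict `lam < |S a b|`
    have hG : Filter.Tendsto
        (fun t : ℝ => (Θ + t • GlassoAux.pert a b)⁻¹ a b + (Θ + t • GlassoAux.pert a b)⁻¹ b a)
        (nhds 0) (nhds 0) := by
      have h1 := GlassoAux.inv_entry_tendsto Θ (GlassoAux.pert a b) hTpd.det_pos.ne' a b
      have h2 := GlassoAux.inv_entry_tendsto Θ (GlassoAux.pert a b) hTpd.det_pos.ne' b a
      have := h1.add h2
      rwa [hW0, hW0', add_zero] at this
    set G : ℝ → ℝ := fun t =>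
      (Θ + t • GlassoAux.pert a b)⁻¹ a b + (Θ + t • GlassoAux.pert a b)⁻¹ b a with hGdef
    rcases lt_abs.mp hSab with hpos | hneg
    · -- case `lam < S a b` : use t = -s with s → 0⁺
      have hev : ∀ᶠ s in nhdsWithin (0:ℝ) (Set.Ioi 0), 2 * S a b - 2 * lam ≤ G (-s) := by
        refine Filter.eventually_of_mem (Ioo_mem_nhdsGT_of_mem ⟨le_refl 0, hcm⟩) fun s hs => ?_
        have hk := key (-s) (by rw [abs_neg, abs_of_pos hs.1]; exact hs.2)
        rw [abs_neg, abs_of_pos hs.1] at hk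
        have h2 : 0 ≤ s * (G (-s) - 2 * S a b + 2 * lam) := by
          simp only [hGdef]
          nlinarith [hk]
        have h3 : 0 ≤ G (-s) - 2 * S a b + 2 * lam := nonneg_of_mul_nonneg_right h2 hs.1
        linarith
      have hGneg : Filter.Tendsto (fun s : ℝ => G (-s)) (nhdsWithin (0:ℝ) (Set.Ioi 0))
          (nhds 0) := by
        have hneg' : Filter.Tendsto (fun s : ℝ => -s) (nhdsWithin (0:ℝ) (Set.Ioi 0))
            (nhds 0) := by
          have h := Filter.Tendsto.mono_left (continuous_neg.tendsto (0:ℝ))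
            (nhdsWithin_le_nhds (s := Set.Ioi (0:ℝ)))
          simpa using h
        exact hG.comp hneg'
      have := ge_of_tendsto hGneg hev
      linarith
    · -- case `lam < -(S a b)` : use t = s with s → 0⁺
      have hev : ∀ᶠ s in nhdsWithin (0:ℝ) (Set.Ioi 0), G s ≤ 2 * S a b + 2 * lam := by
        refine Filter.eventually_of_mem (Ioo_mem_nhdsGT_of_mem ⟨le_refl 0, hcm⟩) fun s hs => ?_
        have hk := key s (by rw [abs_of_pos hs.1]; exact hs.2)
        rw [abs_of_pos hs.1] at hk
        have h2 : 0 ≤ s * (-(G s) + 2 * S a b + 2 * lam) := by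
          simp only [hGdef]
          nlinarith [hk]
        have h3 : 0 ≤ -(G s) + 2 * S a b + 2 * lam := nonneg_of_mul_nonneg_right h2 hs.1
        linarith
      have hGpos : Filter.Tendsto G (nhdsWithin (0:ℝ) (Set.Ioi 0)) (nhds 0) :=
        hG.mono_left nhdsWithin_le_nhds
      have := le_of_tendsto hGpos hev
      linarith
  -- conclude
  intro i j
  constructor
  · exact fun h => GlassoAux.reachable_of_edge_reachable hBedge h
  · exact fun h => GlassoAux.reachable_of_edge_reachable hAedge h
end

section
/- Let λ > 0 and suppose V₁,…,V_K is a partition of {1,…,p} such that |S_ij| ≤ λ whenever i and j lie in distinct blocks of the partition. For each ℓ, let Θ̂_ℓ be a graphical lasso solution at λ for the principal submatrix S[V_ℓ, V_ℓ]. Then the block-diagonal matrix Θ̂ defined by Θ̂[V_ℓ, V_ℓ] = Θ̂_ℓ for each ℓ and Θ̂_ij = 0 whenever i and j lie in distinct blocks is a graphical lasso solution at λ for S. -/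
open Matrix

set_option linter.unusedSectionVars false
set_option maxHeartbeats 1000000

open Finset

section helpers
open scoped MatrixOrder
variable {n : Type*} [Fintype n] [DecidableEq n]

lemma posDef_of_posSemidef_det_ne_zero {M : Matrix n n ℝ} (hM : M.PosSemidef)
    (hdet : M.det ≠ 0) : M.PosDef := by
  refine .of_dotProduct_mulVec_pos hM.1 (fun x hx => ?_)
  rcases (hM.dotProduct_mulVec_nonneg x).lt_or_eq with h | h
  · exact h
  · exfalso
    have h0 : M *ᵥ x = 0 := (hM.dotProduct_mulVec_zero_iff x).mp h.symm
    have hu : IsUnit M := (Matrix.isUnit_iff_isUnit_det M).mpr hdet.isUnit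
    have hinj := Matrix.mulVec_injective_iff_isUnit.mpr hu
    exact hx (hinj (by simpa using h0))

lemma posDef_sqrt {B : Matrix n n ℝ} (hB : B.PosDef) : (CFC.sqrt B).PosDef := by
  apply posDef_of_posSemidef_det_ne_zero (CFC.sqrt_nonneg B).posSemidef
  intro h
  have hd : (CFC.sqrt B).det * (CFC.sqrt B).det = B.det := by
    rw [← det_mul, CFC.sqrt_mul_sqrt_self B hB.posSemidef.nonneg]
  rw [h, mul_zero] at hd
  exact hB.det_pos.ne' hd.symm

lemma trace_eq_sum_eigenvalues {A : Matrix n n ℝ} (hA : A.IsHermitian) :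
    A.trace = ∑ i, hA.eigenvalues i := by
  conv_lhs => rw [hA.spectral_theorem, Unitary.conjStarAlgAut_apply]
  rw [Matrix.trace_mul_cycle]
  have : (star (hA.eigenvectorUnitary : Matrix n n ℝ)) * (hA.eigenvectorUnitary : Matrix n n ℝ)
      = 1 := Unitary.coe_star_mul_self _
  rw [this, one_mul, Matrix.trace_diagonal]
  simp

/-- Key inequality: if `trace (B⁻¹ * X) = card n` then `det X ≤ det B` for PD `X, B`. -/
lemma det_le_det_of_trace {X B : Matrix n n ℝ} (hX : X.PosDef) (hB : B.PosDef)
    (htr : (B⁻¹ * X).trace = (Fintype.card n : ℝ)) : X.det ≤ B.det := by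
  set R : Matrix n n ℝ := CFC.sqrt B with hRdef
  have hR : R.PosDef := posDef_sqrt hB
  have hRR : R * R = B := CFC.sqrt_mul_sqrt_self B hB.posSemidef.nonneg
  have hRinv : (R⁻¹).PosDef := hR.inv
  have hRinvH : (R⁻¹)ᴴ = R⁻¹ := hRinv.isHermitian
  set C : Matrix n n ℝ := R⁻¹ * X * R⁻¹ with hCdef
  have hC : C.PosDef := by
    refine .of_dotProduct_mulVec_pos ?_ ?_
    · have := Matrix.isHermitian_conjTranspose_mul_mul (R⁻¹) hX.isHermitian
      rwa [hRinvH] at this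
    · intro x hx
      have hinj := Matrix.mulVec_injective_iff_isUnit.mpr hRinv.isUnit
      have hy : R⁻¹ *ᵥ x ≠ 0 := fun h => hx (hinj (by simpa using h))
      have : star x ⬝ᵥ C *ᵥ x = star (R⁻¹ *ᵥ x) ⬝ᵥ X *ᵥ (R⁻¹ *ᵥ x) := by
        rw [hCdef, ← Matrix.mulVec_mulVec, ← Matrix.mulVec_mulVec, star_mulVec, hRinvH,
          Matrix.dotProduct_mulVec]
      rw [this]
      exact hX.dotProduct_mulVec_pos hy
  have hRinv2 : R⁻¹ * R⁻¹ = B⁻¹ := by rw [← Matrix.mul_inv_rev, hRR]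
  have htrC : C.trace = (Fintype.card n : ℝ) := by
    rw [hCdef, Matrix.trace_mul_cycle, hRinv2, htr]
  have hdetC : C.det * B.det = X.det := by
    have h1 : C.det = R⁻¹.det * X.det * R⁻¹.det := by rw [hCdef, det_mul, det_mul]
    have h2 : R⁻¹.det * R⁻¹.det = B⁻¹.det := by rw [← det_mul, hRinv2]
    have h3 : B⁻¹.det = (B.det)⁻¹ := by simp [Matrix.det_nonsing_inv, Ring.inverse_eq_inv']
    rw [h1]
    have h4 : R⁻¹.det * X.det * R⁻¹.det * B.det = R⁻¹.det * R⁻¹.det * B.det * X.det := by ring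
    rw [h4, h2, h3, inv_mul_cancel₀ hB.det_pos.ne', one_mul]
  -- now eigenvalues of C
  have hCH := hC.isHermitian
  have hprod : C.det = ∏ i, hCH.eigenvalues i := by
    simpa using hCH.det_eq_prod_eigenvalues
  have hsum : (∑ i, hCH.eigenvalues i) = (Fintype.card n : ℝ) := by
    rw [← trace_eq_sum_eigenvalues hCH, htrC]
  have hCle : C.det ≤ 1 := by
    rw [hprod]
    calc ∏ i, hCH.eigenvalues i ≤ ∏ i, Real.exp (hCH.eigenvalues i - 1) := by
          apply Finset.prod_le_prod
          · exact fun i _ => (hC.eigenvalues_pos i).le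
          · intro i _
            have := Real.add_one_le_exp (hCH.eigenvalues i - 1)
            linarith
      _ = Real.exp (∑ i, (hCH.eigenvalues i - 1)) := by rw [Real.exp_sum]
      _ = 1 := by
          rw [Finset.sum_sub_distrib, hsum]
          simp
  calc X.det = C.det * B.det := hdetC.symm
    _ ≤ 1 * B.det := by
        apply mul_le_mul_of_nonneg_right hCle hB.det_pos.le
    _ = B.det := one_mul _

end helpers

section blocks2
variable {p K : ℕ} (b : Fin p → Fin K)

/-- the diagonal block of `M` corresponding to block `ℓ`. -/
def blk (M : Matrix (Fin p) (Fin p) ℝ) (ℓ : Fin K) :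
    Matrix {i : Fin p // b i = ℓ} {i : Fin p // b i = ℓ} ℝ :=
  M.submatrix Subtype.val Subtype.val

variable {b}

/-- restrict a full sum to a block when the function vanishes outside it -/
lemma sum_restrict (b : Fin p → Fin K) (ℓ : Fin K) (f : Fin p → ℝ) (hf : ∀ i, b i ≠ ℓ → f i = 0) :
    ∑ i, f i = ∑ i : {i : Fin p // b i = ℓ}, f i.1 := by
  rw [← Finset.sum_subtype (Finset.univ.filter (fun i => b i = ℓ)) (by simp) f]
  rw [Finset.sum_filter_of_ne]
  intro x _ hx
  by_contra h
  exact hx (hf x h)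

/-- decompose a double sum into blocks, when it vanishes off-block -/
lemma sum_blocks (F : Fin p → Fin p → ℝ) (hF : ∀ i j, b i ≠ b j → F i j = 0) :
    ∑ i, ∑ j, F i j
      = ∑ ℓ : Fin K, ∑ i : {i : Fin p // b i = ℓ}, ∑ j : {j : Fin p // b j = ℓ}, F i.1 j.1 := by
  have h1 : ∀ i : Fin p, ∑ j, F i j = ∑ j : {j : Fin p // b j = b i}, F i j.1 := by
    intro i
    exact sum_restrict b (b i) (F i) (fun j hj => hF i j (fun h => hj h.symm))
  calc ∑ i, ∑ j, F i j = ∑ i, ∑ j : {j : Fin p // b j = b i}, F i j.1 := by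
        exact Finset.sum_congr rfl fun i _ => h1 i
    _ = ∑ ℓ : Fin K, ∑ i ∈ Finset.univ.filter (fun i => b i = ℓ),
          ∑ j : {j : Fin p // b j = b i}, F i j.1 := by
        rw [Finset.sum_fiberwise]
    _ = ∑ ℓ : Fin K, ∑ i ∈ Finset.univ.filter (fun i => b i = ℓ),
          ∑ j : {j : Fin p // b j = ℓ}, F i j.1 := by
        refine Finset.sum_congr rfl fun ℓ _ => Finset.sum_congr rfl fun i hi => ?_
        have hbi : b i = ℓ := by simpa using hi
        subst hbi
        rfl
    _ = ∑ ℓ : Fin K, ∑ i : {i : Fin p // b i = ℓ}, ∑ j : {j : Fin p // b j = ℓ}, F i.1 j.1 := by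
        refine Finset.sum_congr rfl fun ℓ _ => ?_
        exact Finset.sum_subtype (Finset.univ.filter (fun i => b i = ℓ)) (by simp)
          (fun i => ∑ j : {j : Fin p // b j = ℓ}, F i j.1)


lemma blk_apply (M : Matrix (Fin p) (Fin p) ℝ) (ℓ : Fin K)
    (i j : {i : Fin p // b i = ℓ}) : blk b M ℓ i j = M i.1 j.1 := rfl

lemma quad_expand {m : Type*} [Fintype m] (M : Matrix m m ℝ) (x : m → ℝ) :
    star x ⬝ᵥ M *ᵥ x = ∑ i, ∑ j, x i * M i j * x j := by
  simp [Matrix.mulVec, dotProduct, Finset.mul_sum, mul_assoc]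

lemma trace_mul_expand {m : Type*} [Fintype m] (A B : Matrix m m ℝ) :
    (A * B).trace = ∑ i, ∑ j, A i j * B j i := by
  simp [Matrix.trace, Matrix.mul_apply, Matrix.diag]

/-- a diagonal block of a positive definite matrix is positive definite -/
lemma blk_posDef {Ψ : Matrix (Fin p) (Fin p) ℝ} (hΨ : Ψ.PosDef) (ℓ : Fin K) :
    (blk b Ψ ℓ).PosDef := by
  refine .of_dotProduct_mulVec_pos ?_ ?_
  · ext i j
    simp only [conjTranspose_apply, blk_apply, star_trivial]
    exact congrFun (congrFun hΨ.1.symm j.1) i.1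
  · intro x hx
    set y : Fin p → ℝ := fun i => if h : b i = ℓ then x ⟨i, h⟩ else 0 with hy
    have hyx : ∀ i : {i : Fin p // b i = ℓ}, y i.1 = x i := by
      intro i; simp only [hy, i.2, dif_pos]
    have hyne : y ≠ 0 := by
      obtain ⟨i, hi⟩ := Function.ne_iff.mp hx
      refine Function.ne_iff.mpr ⟨i.1, ?_⟩
      rw [hyx i]; simpa using hi
    have hq := hΨ.dotProduct_mulVec_pos hyne
    rw [quad_expand] at hq
    rw [quad_expand]
    have hrw : ∑ i, ∑ j, y i * Ψ i j * y j
        = ∑ i : {i : Fin p // b i = ℓ}, ∑ j : {j : Fin p // b j = ℓ},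
            x i * (blk b Ψ ℓ) i j * x j := by
      rw [sum_restrict b ℓ _ (fun i hi => by simp [hy, hi])]
      refine Finset.sum_congr rfl fun i _ => ?_
      rw [sum_restrict b ℓ _ (fun j hj => by simp [hy, hj])]
      refine Finset.sum_congr rfl fun j _ => ?_
      rw [hyx i, hyx j, blk_apply]
    rwa [hrw] at hq

/-- a matrix vanishing off-block with positive definite diagonal blocks is positive definite -/
lemma posDef_of_blocks {M : Matrix (Fin p) (Fin p) ℝ}
    (hoff : ∀ i j, b i ≠ b j → M i j = 0)
    (hblk : ∀ ℓ, (blk b M ℓ).PosDef) : M.PosDef := by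
  refine .of_dotProduct_mulVec_pos ?_ ?_
  · ext i j
    simp only [conjTranspose_apply, star_trivial]
    by_cases h : b j = b i
    · have := congrFun (congrFun (hblk (b i)).1.symm ⟨i, rfl⟩) ⟨j, h⟩
      simpa [conjTranspose_apply, blk_apply] using this.symm
    · rw [hoff j i h, hoff i j (fun h' => h h'.symm)]
  · intro x hx
    rw [quad_expand]
    have hrw : ∑ i, ∑ j, x i * M i j * x j
        = ∑ ℓ : Fin K, ∑ i : {i : Fin p // b i = ℓ}, ∑ j : {j : Fin p // b j = ℓ},
            x i.1 * M i.1 j.1 * x j.1 :=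
      sum_blocks _ (fun i j hij => by rw [hoff i j hij, mul_zero, zero_mul])
    rw [hrw]
    obtain ⟨i0, hi0⟩ := Function.ne_iff.mp hx
    apply Finset.sum_pos'
    · intro ℓ _
      have h := (hblk ℓ).posSemidef.dotProduct_mulVec_nonneg (fun i => x i.1)
      rwa [quad_expand] at h
    · refine ⟨b i0, Finset.mem_univ _, ?_⟩
      have h := (hblk (b i0)).dotProduct_mulVec_pos (x := fun i : {i : Fin p // b i = b i0} => x i.1)
        (Function.ne_iff.mpr ⟨⟨i0, rfl⟩, hi0⟩)
      rwa [quad_expand] at h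

/-- determinant decomposes over blocks -/
lemma det_blocks {M : Matrix (Fin p) (Fin p) ℝ}
    (hoff : ∀ i j, b i ≠ b j → M i j = 0) :
    M.det = ∏ ℓ : Fin K, (blk b M ℓ).det := by
  have hbt : M.BlockTriangular b := fun i j hij => hoff i j (fun h => hij.ne h.symm)
  exact hbt.det_fintype

/-- trace of `A * M` decomposes over blocks when `M` vanishes off-block -/
lemma trace_blocks (A : Matrix (Fin p) (Fin p) ℝ) {M : Matrix (Fin p) (Fin p) ℝ}
    (hoff : ∀ i j, b i ≠ b j → M i j = 0) :
    (A * M).trace = ∑ ℓ : Fin K, ((blk b A ℓ) * (blk b M ℓ)).trace := by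
  rw [trace_mul_expand]
  rw [sum_blocks (fun i j => A i j * M j i)
    (fun i j hij => by simp [hoff j i (fun h => hij h.symm)])]
  exact Finset.sum_congr rfl fun ℓ _ => (trace_mul_expand _ _).symm

/-- sum of absolute values decomposes over blocks -/
lemma abs_blocks {M : Matrix (Fin p) (Fin p) ℝ}
    (hoff : ∀ i j, b i ≠ b j → M i j = 0) :
    ∑ i, ∑ j, |M i j| = ∑ ℓ : Fin K, ∑ i, ∑ j, |(blk b M ℓ) i j| := by
  exact sum_blocks (fun i j => |M i j|) (fun i j hij => by simp [hoff i j hij])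

end blocks2

section obj
variable {p K : ℕ} {b : Fin p → Fin K}

/-- the glasso objective decomposes over blocks -/
lemma obj_blocks (lam : ℝ) (A : Matrix (Fin p) (Fin p) ℝ)
    {M : Matrix (Fin p) (Fin p) ℝ} (hoff : ∀ i j, b i ≠ b j → M i j = 0)
    (hblk : ∀ ℓ, (blk b M ℓ).PosDef) :
    glassoObj lam A M = ∑ ℓ : Fin K, glassoObj lam (blk b A ℓ) (blk b M ℓ) := by
  unfold glassoObj
  rw [det_blocks hoff, trace_blocks A hoff, abs_blocks hoff]
  rw [Real.log_prod (fun ℓ _ => (hblk ℓ).det_pos.ne'), Finset.mul_sum]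
  rw [← Finset.sum_neg_distrib, Finset.sum_add_distrib, Finset.sum_add_distrib]

end obj

/-- if a partition of the vertices (given by the block-assignment map `b`) separates
`S` at level `lam`, then the block-diagonal matrix assembled from graphical lasso solutions on the
blocks is a graphical lasso solution for `S`. -/
theorem glasso_block_diagonal_solution
    (p : ℕ) (hp : 1 ≤ p) (S : Matrix (Fin p) (Fin p) ℝ) (hS : S.PosSemidef)
    (lam : ℝ) (hlam : 0 < lam)
    (K : ℕ) (b : Fin p → Fin K) (hb : Function.Surjective b)
    (hsep : ∀ i j : Fin p, b i ≠ b j → |S i j| ≤ lam)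
    (Θ : Matrix (Fin p) (Fin p) ℝ)
    (hoff : ∀ i j : Fin p, b i ≠ b j → Θ i j = 0)
    (hsub : ∀ ℓ : Fin K,
      IsGlassoSol lam
        (S.submatrix (Subtype.val : {i : Fin p // b i = ℓ} → Fin p) Subtype.val)
        (Θ.submatrix (Subtype.val : {i : Fin p // b i = ℓ} → Fin p) Subtype.val)) :
    IsGlassoSol lam S Θ := by
  have hΘblk : ∀ ℓ, (blk b Θ ℓ).PosDef := fun ℓ => (hsub ℓ).1
  have hΘPD : Θ.PosDef := posDef_of_blocks hoff hΘblk
  refine ⟨hΘPD, fun Ψ hΨ => ?_⟩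
  have hΨsym : ∀ i j, Ψ j i = Ψ i j := by
    intro i j
    have h := congrFun (congrFun hΨ.1 j) i
    simpa [Matrix.conjTranspose_apply] using h.symm
  set Bm : Matrix (Fin p) (Fin p) ℝ := Matrix.of fun i j => if b i = b j then Ψ i j else 0
    with hBm
  have hBoff : ∀ i j, b i ≠ b j → Bm i j = 0 := fun i j h => by simp [hBm, h]
  have hBon : ∀ i j, b i = b j → Bm i j = Ψ i j := fun i j h => by simp [hBm, h]
  have hBblk_eq : ∀ ℓ, blk b Bm ℓ = blk b Ψ ℓ := by
    intro ℓ
    ext i j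
    rw [blk_apply, blk_apply]
    exact hBon i.1 j.1 (i.2.trans j.2.symm)
  have hBblk : ∀ ℓ, (blk b Bm ℓ).PosDef := fun ℓ => (hBblk_eq ℓ) ▸ blk_posDef hΨ ℓ
  have hBPD : Bm.PosDef := posDef_of_blocks hBoff hBblk
  -- step 1 : glassoObj Θ ≤ glassoObj Bm via the block solutions
  have h1 : glassoObj lam S Θ ≤ glassoObj lam S Bm := by
    rw [obj_blocks lam S hoff hΘblk, obj_blocks lam S hBoff hBblk]
    refine Finset.sum_le_sum fun ℓ _ => ?_
    rw [hBblk_eq ℓ]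
    exact (hsub ℓ).2 (blk b Ψ ℓ) (blk_posDef hΨ ℓ)
  -- step 2 : det Ψ ≤ det Bm
  set C : Matrix (Fin p) (Fin p) ℝ :=
    Matrix.of fun i j => if h : b i = b j then (blk b Ψ (b j))⁻¹ ⟨i, h⟩ ⟨j, rfl⟩ else 0 with hC
  have hCoff : ∀ i j, b i ≠ b j → C i j = 0 := fun i j h => by simp [hC, h]
  have hBC : Bm * C = 1 := by
    ext i j
    rw [Matrix.mul_apply]
    by_cases hij : b i = b j
    · have hrestrict : ∀ k, b k ≠ b j → Bm i k * C k j = 0 := fun k hk => by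
        rw [hCoff k j hk, mul_zero]
      rw [sum_restrict b (b j) _ hrestrict]
      have hterm : ∀ k : {k : Fin p // b k = b j}, Bm i k.1 * C k.1 j
          = (blk b Ψ (b j)) ⟨i, hij⟩ k * (blk b Ψ (b j))⁻¹ k ⟨j, rfl⟩ := by
        intro k
        have h1' : Bm i k.1 = Ψ i k.1 := hBon i k.1 (hij.trans k.2.symm)
        have h2' : C k.1 j = (blk b Ψ (b j))⁻¹ ⟨k.1, k.2⟩ ⟨j, rfl⟩ := by
          simp only [hC, Matrix.of_apply, dif_pos k.2]
        rw [h1', h2']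
        rfl
      rw [Finset.sum_congr rfl (fun k _ => hterm k), ← Matrix.mul_apply,
        Matrix.mul_nonsing_inv _ (blk_posDef hΨ (b j)).det_pos.ne'.isUnit]
      by_cases hij2 : i = j
      · subst hij2
        simp [Matrix.one_apply]
      · simp [Matrix.one_apply, hij2, Subtype.ext_iff]
    · have hz : ∀ k, Bm i k * C k j = 0 := by
        intro k
        by_cases hk : b k = b j
        · rw [hBoff i k (fun h => hij (h.trans hk)), zero_mul]
        · rw [hCoff k j hk, mul_zero]
      rw [Finset.sum_eq_zero (fun k _ => hz k),
        Matrix.one_apply_ne (fun h => hij (by rw [h]))]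
  have hBinv : Bm⁻¹ = C := Matrix.inv_eq_right_inv hBC
  have htr : (Bm⁻¹ * Ψ).trace = (Fintype.card (Fin p) : ℝ) := by
    have h1' : (Bm⁻¹ * Ψ).trace = (Bm⁻¹ * Bm).trace := by
      rw [trace_mul_expand, trace_mul_expand]
      refine Finset.sum_congr rfl fun i _ => Finset.sum_congr rfl fun j _ => ?_
      by_cases h : b j = b i
      · rw [hBon j i h]
      · rw [hBinv, hCoff i j (fun h' => h h'.symm), zero_mul, zero_mul]
    rw [h1', Matrix.nonsing_inv_mul _ hBPD.det_pos.ne'.isUnit, Matrix.trace_one]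
  have hdet : Ψ.det ≤ Bm.det := det_le_det_of_trace hΨ hBPD htr
  have hlog : Real.log Ψ.det ≤ Real.log Bm.det := Real.log_le_log hΨ.det_pos hdet
  -- step 3 : trace plus penalty comparison
  have expand : ∀ M : Matrix (Fin p) (Fin p) ℝ,
      (S * M).trace + lam * ∑ i, ∑ j, |M i j|
        = ∑ i, ∑ j, (S i j * M j i + lam * |M i j|) := by
    intro M
    rw [trace_mul_expand, Finset.mul_sum, ← Finset.sum_add_distrib]
    refine Finset.sum_congr rfl fun i _ => ?_
    rw [Finset.mul_sum, ← Finset.sum_add_distrib]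
  have key : ∀ i j, S i j * Bm j i + lam * |Bm i j| ≤ S i j * Ψ j i + lam * |Ψ i j| := by
    intro i j
    by_cases h : b i = b j
    · rw [hBon j i h.symm, hBon i j h]
    · rw [hBoff j i (fun h' => h h'.symm), hBoff i j h]
      simp only [mul_zero, abs_zero, add_zero]
      have habs : |S i j * Ψ j i| ≤ lam * |Ψ i j| := by
        rw [abs_mul, hΨsym i j]
        exact mul_le_mul_of_nonneg_right (hsep i j h) (abs_nonneg _)
      have hneg := neg_abs_le (S i j * Ψ j i)
      linarith
  have hrest : (S * Bm).trace + lam * ∑ i, ∑ j, |Bm i j|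
      ≤ (S * Ψ).trace + lam * ∑ i, ∑ j, |Ψ i j| := by
    rw [expand Bm, expand Ψ]
    exact Finset.sum_le_sum fun i _ => Finset.sum_le_sum fun j _ => key i j
  have h2 : glassoObj lam S Bm ≤ glassoObj lam S Ψ := by
    unfold glassoObj
    linarith
  linarith
end

section
/- Let λ > 0 and let Θ̂ be a graphical lasso solution at λ for S. If vertices i and j lie in distinct connected components of the estimated concentration graph Ĝ^(λ), then |S_ij| ≤ λ. -/
open Matrix

lemma aux_pow_entry_zero {p : ℕ} (Θ : Matrix (Fin p) (Fin p) ℝ)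
    (R : Fin p → Fin p → Prop) (hrefl : ∀ k, R k k)
    (htrans : ∀ a b c, R a b → R b c → R a c)
    (hsupp : ∀ k l, ¬ R k l → Θ k l = 0) :
    ∀ (m : ℕ) (k l : Fin p), ¬ R k l → (Θ ^ m) k l = 0 := by
  intro m
  induction m with
  | zero =>
    intro k l h
    have hkl : k ≠ l := fun e => h (e ▸ hrefl k)
    simp [Matrix.one_apply, hkl]
  | succ m ih =>
    intro k l h
    rw [pow_succ, Matrix.mul_apply]
    refine Finset.sum_eq_zero fun x _ => ?_
    by_cases h1 : R k x
    · have h2 : ¬ R x l := fun h2 => h (htrans _ _ _ h1 h2)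
      rw [hsupp x l h2, mul_zero]
    · rw [ih k x h1, zero_mul]

lemma aux_inv_entry_zero {p : ℕ} (Θ : Matrix (Fin p) (Fin p) ℝ) (hdet : Θ.det ≠ 0)
    (R : Fin p → Fin p → Prop) (hrefl : ∀ k, R k k)
    (htrans : ∀ a b c, R a b → R b c → R a c)
    (hsupp : ∀ k l, ¬ R k l → Θ k l = 0) :
    ∀ k l, ¬ R k l → Θ⁻¹ k l = 0 := by
  have hc := Matrix.aeval_self_charpoly Θ
  set c := Θ.charpoly with hcdef
  have hc0 : c.coeff 0 ≠ 0 := by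
    intro h
    rw [Matrix.det_eq_sign_charpoly_coeff] at hdet
    rw [← hcdef, h, mul_zero] at hdet
    exact hdet rfl
  have hsplit : Polynomial.X * c.divX + Polynomial.C (c.coeff 0) = c :=
    Polynomial.X_mul_divX_add c
  have h1 : Θ * (Polynomial.aeval Θ c.divX) + (c.coeff 0) • (1 : Matrix (Fin p) (Fin p) ℝ) = 0 := by
    have h2 := congrArg (Polynomial.aeval Θ) hsplit
    rw [map_add, _root_.map_mul, Polynomial.aeval_X, Polynomial.aeval_C,
      Algebra.algebraMap_eq_smul_one] at h2
    rw [h2, hc]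
  have hright : Θ * ((-(c.coeff 0)⁻¹) • Polynomial.aeval Θ c.divX) = 1 := by
    rw [Matrix.mul_smul]
    have h3 : Θ * Polynomial.aeval Θ c.divX = -((c.coeff 0) • (1 : Matrix (Fin p) (Fin p) ℝ)) := by
      linear_combination (norm := module) h1
    rw [h3, smul_neg, neg_smul, neg_neg, smul_smul, inv_mul_cancel₀ hc0, one_smul]
  have hinv : Θ⁻¹ = (-(c.coeff 0)⁻¹) • Polynomial.aeval Θ c.divX :=
    Matrix.inv_eq_right_inv hright
  intro k l h
  rw [hinv, Matrix.smul_apply]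
  have hz : (Polynomial.aeval Θ c.divX) k l = 0 := by
    rw [Polynomial.aeval_eq_sum_range, Matrix.sum_apply]
    refine Finset.sum_eq_zero fun m _ => ?_
    rw [Matrix.smul_apply, aux_pow_entry_zero Θ R hrefl htrans hsupp m k l h, smul_zero]
  rw [hz, smul_zero]


lemma aux_quad_lb {p : ℕ} (hp : 1 ≤ p) {Θ : Matrix (Fin p) (Fin p) ℝ} (h : Θ.PosDef) :
    ∃ c > (0:ℝ), ∀ x : Fin p → ℝ, c * (∑ k, x k ^ 2) ≤ x ⬝ᵥ Θ *ᵥ x := by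
  classical
  set V := EuclideanSpace ℝ (Fin p)
  set q : V → ℝ := fun x => (x : Fin p → ℝ) ⬝ᵥ Θ *ᵥ (x : Fin p → ℝ) with hq
  have hcont : Continuous q := by
    have h1 : Continuous fun x : V => (x : Fin p → ℝ) :=
      (PiLp.continuous_ofLp 2 (fun _ : Fin p => ℝ))
    have h2 : Continuous fun y : Fin p → ℝ => y ⬝ᵥ Θ *ᵥ y := by
      have : (fun y : Fin p → ℝ => y ⬝ᵥ Θ *ᵥ y)
          = fun y : Fin p → ℝ => ∑ k, y k * ∑ l, Θ k l * y l := by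
        funext y
        simp [dotProduct, Matrix.mulVec]
      rw [this]
      fun_prop
    exact h2.comp h1
  have hx0 : (EuclideanSpace.single (⟨0, hp⟩ : Fin p) (1:ℝ) : V) ∈ Metric.sphere (0:V) 1 := by
    simp [EuclideanSpace.norm_single]
  obtain ⟨z, hz, hmin⟩ := (isCompact_sphere (0:V) 1).exists_isMinOn ⟨_, hx0⟩
    hcont.continuousOn
  have hznorm : ‖z‖ = 1 := mem_sphere_zero_iff_norm.mp hz
  have hzne : (z : Fin p → ℝ) ≠ 0 := by
    intro hzz
    have : z = 0 := by simpa using congrArg (WithLp.toLp 2) hzz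
    rw [this] at hznorm; simp at hznorm
  have hc : 0 < q z := by simpa using h.dotProduct_mulVec_pos hzne
  refine ⟨q z, hc, fun x => ?_⟩
  by_cases hx : x = 0
  · simp [hx]
  · set xv : V := WithLp.toLp 2 x with hxv
    have hxn : ‖xv‖ ≠ 0 := by
      rw [norm_ne_zero_iff]
      exact fun hzz => hx (by simpa [hxv] using congrArg WithLp.ofLp hzz)
    have hxnpos : 0 < ‖xv‖ := (norm_nonneg _).lt_of_ne' hxn
    set y : V := ‖xv‖⁻¹ • xv with hy
    have hymem : y ∈ Metric.sphere (0:V) 1 := by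
      simp [hy, norm_smul, abs_of_pos (inv_pos.mpr hxnpos), inv_mul_cancel₀ hxn]
    have hqy : q z ≤ q y := hmin hymem
    have hscale : q y = ‖xv‖⁻¹ * (‖xv‖⁻¹ * q xv) := by
      show ((‖xv‖⁻¹ • x : Fin p → ℝ) ⬝ᵥ Θ *ᵥ (‖xv‖⁻¹ • x : Fin p → ℝ)) = _
      rw [Matrix.mulVec_smul, dotProduct_smul, smul_dotProduct]
      simp [smul_eq_mul, hq, hxv]
    have hsum : ∑ k, x k ^ 2 = ‖xv‖ ^ 2 := by
      rw [EuclideanSpace.norm_eq]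
      rw [Real.sq_sqrt (by positivity)]
      simp [sq_abs, hxv]
    rw [hsum]
    have := mul_le_mul_of_nonneg_left hqy (le_of_lt (by positivity : (0:ℝ) < ‖xv‖ ^ 2))
    calc q z * ‖xv‖ ^ 2 = ‖xv‖ ^ 2 * q z := by ring
    _ ≤ ‖xv‖ ^ 2 * q y := this
    _ = q xv := by rw [hscale]; field_simp


lemma aux_det_expand {p : ℕ} (Θ : Matrix (Fin p) (Fin p) ℝ) (i j : Fin p) (hij : i ≠ j) (t : ℝ) :
    (Θ + t • (Matrix.of fun k l =>
        (if k = i ∧ l = j then (1:ℝ) else 0) + (if k = j ∧ l = i then 1 else 0))).det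
    = Θ.det + t * Θ.adjugate j i + t * Θ.adjugate i j
      + t * (t * ((Θ.updateRow j ((Pi.single i (1:ℝ) : Fin p → ℝ))).updateRow i ((Pi.single j (1:ℝ) : Fin p → ℝ))).det) := by
  classical
  set E : Matrix (Fin p) (Fin p) ℝ := Matrix.of fun k l =>
      (if k = i ∧ l = j then (1:ℝ) else 0) + (if k = j ∧ l = i then 1 else 0) with hE
  have hΨ : Θ + t • E =
      updateRow (updateRow Θ i (Θ i + t • (Pi.single j (1:ℝ) : Fin p → ℝ))) j (Θ j + t • (Pi.single i (1:ℝ) : Fin p → ℝ)) := by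
    ext k l
    by_cases hk : k = j
    · subst hk
      rw [updateRow_self]
      simp [hE, Pi.single_apply, Ne.symm hij]
    · rw [updateRow_ne hk]
      by_cases hki : k = i
      · subst hki
        rw [updateRow_self]
        simp [hE, Pi.single_apply, hij]
      · rw [updateRow_ne hki]
        simp [hE, hk, hki]
  rw [hΨ]
  set B := updateRow Θ i (Θ i + t • (Pi.single j (1:ℝ) : Fin p → ℝ)) with hB
  have hBj : B j = Θ j := updateRow_ne (Ne.symm hij)
  rw [det_updateRow_add, det_updateRow_smul]
  have h1 : updateRow B j (Θ j) = B := by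
    conv_lhs => rw [← hBj]
    rw [updateRow_eq_self]
  rw [h1, hB, det_updateRow_add, det_updateRow_smul, updateRow_eq_self]
  have h2 : updateRow B j ((Pi.single i (1:ℝ) : Fin p → ℝ)) =
      updateRow (updateRow Θ j ((Pi.single i (1:ℝ) : Fin p → ℝ))) i (Θ i + t • (Pi.single j (1:ℝ) : Fin p → ℝ)) := by
    ext k l
    by_cases hk : k = j
    · subst hk
      rw [updateRow_self, updateRow_ne (Ne.symm hij), updateRow_self]
    · rw [updateRow_ne hk]
      by_cases hki : k = i
      · subst hki
        rw [hB, updateRow_self, updateRow_self]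
      · rw [hB, updateRow_ne hki, updateRow_ne hki, updateRow_ne hk]
  rw [h2, det_updateRow_add, det_updateRow_smul]
  have h3 : (Θ.updateRow j ((Pi.single i (1:ℝ) : Fin p → ℝ))).updateRow i (Θ i) = Θ.updateRow j ((Pi.single i (1:ℝ) : Fin p → ℝ)) := by
    conv_lhs => rw [show Θ i = (Θ.updateRow j ((Pi.single i (1:ℝ) : Fin p → ℝ))) i from (updateRow_ne hij).symm]
    rw [updateRow_eq_self]
  rw [h3, ← adjugate_apply, ← adjugate_apply]
  ring

lemma aux_abs2 (a b : ℝ) : |a * b + b * a| ≤ a ^ 2 + b ^ 2 := by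
  have h : a * b + b * a = 2 * (a * b) := by ring
  rw [h, abs_mul, abs_two, abs_mul]
  nlinarith [sq_nonneg (|a| - |b|), sq_abs a, sq_abs b, abs_nonneg a, abs_nonneg b]

lemma aux_bound (ε t a b s : ℝ) (habs : |t| = ε) (h1 : a ^ 2 + b ^ 2 ≤ s) :
    |t * (a * b + b * a)| ≤ ε * s := by
  rw [abs_mul, habs]
  have h0 : 0 ≤ ε := by rw [← habs]; exact abs_nonneg t
  exact mul_le_mul_of_nonneg_left (le_trans (aux_abs2 a b) h1) h0

lemma aux_pos (c ε q T s : ℝ) (h1 : c * s ≤ q) (h2 : 0 < s) (h3 : ε ≤ c / 2)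
    (h4 : -(ε * s) ≤ T) (h5 : 0 < c) : 0 < q + T := by nlinarith

lemma aux_final (ε δ D dd : ℝ) (hεpos : 0 < ε) (hδpos : 0 < δ) (hD : 0 < D) (hdd : 0 ≤ dd)
    (hε1 : ε ≤ 1) (h11 : (D - ε * ε * dd) * (1 + 2 * ε * δ) ≤ D)
    (hεd : ε * (dd * (1 + 2 * δ) + 1) ≤ δ * D) : False := by
  nlinarith [mul_le_mul_of_nonneg_left hεd hεpos.le, mul_pos (mul_pos hεpos hδpos) hD,
    mul_nonneg (mul_nonneg (mul_nonneg (sub_nonneg.mpr hε1) (mul_nonneg hεpos.le hεpos.le))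
      hδpos.le) hdd, sq_nonneg ε, mul_pos hεpos hεpos]


/-- if `i` and `j` lie in distinct connected components of the estimated
concentration graph, then `|S i j| ≤ lam`. -/
theorem glasso_distinct_components_small_cov
    (p : ℕ) (hp : 1 ≤ p) (S : Matrix (Fin p) (Fin p) ℝ) (hS : S.PosSemidef)
    (lam : ℝ) (hlam : 0 < lam)
    (Θ : Matrix (Fin p) (Fin p) ℝ) (hΘ : IsGlassoSol lam S Θ)
    (i j : Fin p) (hij : ¬ (concGraph Θ).Reachable i j) :
    |S i j| ≤ lam := by
  classical
  obtain ⟨hpos, hopt⟩ := hΘ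
  by_contra hcon
  push_neg at hcon
  set δ := |S i j| - lam with hδdef
  have hδpos : 0 < δ := by simp [hδdef]; linarith
  have hijne : i ≠ j := by
    rintro rfl
    exact hij (SimpleGraph.Reachable.refl i)
  have hΘij : Θ i j = 0 := by
    by_contra hne
    exact hij ((SimpleGraph.fromRel_adj _ i j).mpr ⟨hijne, Or.inl hne⟩).reachable
  have hΘji : Θ j i = 0 := by
    by_contra hne
    exact hij (((SimpleGraph.fromRel_adj _ j i).mpr ⟨hijne.symm, Or.inl hne⟩).reachable).symm
  have hSsym : S j i = S i j := by
    have := congrFun (congrFun hS.1 i) j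
    simpa [Matrix.conjTranspose_apply] using this
  have hΘsym : ∀ k l, Θ k l = Θ l k := by
    intro k l
    have := congrFun (congrFun hpos.1 l) k
    simpa [Matrix.conjTranspose_apply] using this
  have hdet0 : (0:ℝ) < Θ.det := hpos.det_pos
  -- inverse entries vanish across components
  have hsupp : ∀ k l, ¬ (concGraph Θ).Reachable k l → Θ k l = 0 := by
    intro k l h
    by_cases hkl : k = l
    · exact absurd (hkl ▸ SimpleGraph.Reachable.refl k) h
    · by_contra hne
      exact h ((SimpleGraph.fromRel_adj _ k l).mpr ⟨hkl, Or.inl hne⟩).reachable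
  have hinv := aux_inv_entry_zero Θ hdet0.ne' (fun k l => (concGraph Θ).Reachable k l)
    (fun k => SimpleGraph.Reachable.refl k) (fun a b c h1 h2 => h1.trans h2) hsupp
  have hadjz : ∀ k l, ¬ (concGraph Θ).Reachable k l → Θ.adjugate k l = 0 := by
    intro k l h
    have h5 : Θ⁻¹ k l = Θ.det⁻¹ * Θ.adjugate k l := by
      rw [Matrix.inv_def, Matrix.smul_apply, Ring.inverse_eq_inv', smul_eq_mul]
    rw [hinv k l h] at h5
    rcases mul_eq_zero.mp h5.symm with h6 | h6
    · exact absurd h6 (inv_ne_zero hdet0.ne')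
    · exact h6
  have hadjij : Θ.adjugate i j = 0 := hadjz i j hij
  have hadjji : Θ.adjugate j i = 0 := hadjz j i (fun h => hij h.symm)
  -- quadratic lower bound
  obtain ⟨c, hcpos, hquad⟩ := aux_quad_lb hp hpos
  set D := Θ.det with hDdef
  set d := ((Θ.updateRow j ((Pi.single i (1:ℝ) : Fin p → ℝ))).updateRow i
      ((Pi.single j (1:ℝ) : Fin p → ℝ))).det with hddef
  set ε := min 1 (min (c/2) (δ * D / (|d| * (1 + 2*δ) + 1))) with hεdef
  have hden : (0:ℝ) < |d| * (1 + 2*δ) + 1 := by positivity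
  have hεpos : 0 < ε := by
    apply lt_min one_pos
    apply lt_min (by positivity)
    positivity
  have hε1 : ε ≤ 1 := min_le_left _ _
  have hεc : ε ≤ c/2 := le_trans (min_le_right _ _) (min_le_left _ _)
  have hεd : ε * (|d| * (1 + 2*δ) + 1) ≤ δ * D := by
    have : ε ≤ δ * D / (|d| * (1 + 2*δ) + 1) :=
      le_trans (min_le_right 1 _) (min_le_right (c/2) _)
    calc ε * (|d| * (1 + 2*δ) + 1)
        ≤ (δ * D / (|d| * (1 + 2*δ) + 1)) * (|d| * (1 + 2*δ) + 1) := by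
          apply mul_le_mul_of_nonneg_right this hden.le
      _ = δ * D := by field_simp
  set t : ℝ := if 0 ≤ S i j then -ε else ε with htdef
  have habs : |t| = ε := by
    rw [htdef]
    split_ifs <;> simp [abs_of_pos hεpos, hεpos.le]
  have ht2 : t * t = ε * ε := by
    rw [htdef]; split_ifs <;> ring
  have htS : t * S i j = -(ε * |S i j|) := by
    rw [htdef]
    split_ifs with h
    · rw [abs_of_nonneg h]; ring
    · rw [abs_of_neg (not_le.mp h)]; ring
  set E : Matrix (Fin p) (Fin p) ℝ := Matrix.of fun k l =>
      (if k = i ∧ l = j then (1:ℝ) else 0) + (if k = j ∧ l = i then 1 else 0) with hE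
  set Ψ := Θ + t • E with hΨdef
  have hEquad : ∀ x : Fin p → ℝ, x ⬝ᵥ E *ᵥ x = x i * x j + x j * x i := by
    intro x
    simp only [dotProduct, Matrix.mulVec, hE, Matrix.of_apply, add_mul, ite_mul, one_mul,
      zero_mul, ite_and, Finset.sum_add_distrib]
    have h1 : ∀ k : Fin p, (∑ l : Fin p, if k = i then if l = j then x l else 0 else 0)
        = if k = i then x j else 0 := by
      intro k; split_ifs <;> simp
    have h2 : ∀ k : Fin p, (∑ l : Fin p, if k = j then if l = i then x l else 0 else 0)
        = if k = j then x i else 0 := by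
      intro k; split_ifs <;> simp
    simp only [h1, h2, mul_add, Finset.sum_add_distrib, mul_ite, mul_zero]
    rw [Finset.sum_ite_eq' Finset.univ i fun k => x k * x j,
        Finset.sum_ite_eq' Finset.univ j fun k => x k * x i]
    simp
  -- positive definiteness of Ψ
  have hΨpos : Ψ.PosDef := by
    refine Matrix.PosDef.of_dotProduct_mulVec_pos ?_ ?_
    · show Ψᴴ = Ψ
      ext k l
      rw [Matrix.conjTranspose_apply, star_trivial]
      simp only [hΨdef, Matrix.add_apply, Matrix.smul_apply, hE, Matrix.of_apply, smul_eq_mul]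
      rw [hΘsym l k]
      have e1 : (l = i ∧ k = j) = (k = j ∧ l = i) := propext and_comm
      have e2 : (l = j ∧ k = i) = (k = i ∧ l = j) := propext and_comm
      simp only [e1, e2]
      ring
    · intro x hx
      have hstar : star x = x := by funext k; simp
      rw [hstar]
      have hmv : Ψ *ᵥ x = Θ *ᵥ x + t • (E *ᵥ x) := by
        rw [hΨdef, Matrix.add_mulVec, Matrix.smul_mulVec]
      rw [hmv, dotProduct_add, dotProduct_smul, smul_eq_mul, hEquad]
      have hq := hquad x
      have hsum_pos : 0 < ∑ k, x k ^ 2 := by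
        obtain ⟨k, hk⟩ := Function.ne_iff.mp hx
        have hk' : x k ≠ 0 := hk
        refine Finset.sum_pos' (fun m _ => sq_nonneg _)
          ⟨k, Finset.mem_univ k, pow_two_pos_of_ne_zero hk'⟩
      have h3 : x i ^ 2 + x j ^ 2 ≤ ∑ k, x k ^ 2 := by
        have h3 := Finset.sum_le_sum_of_subset_of_nonneg
          (Finset.subset_univ ({i, j} : Finset (Fin p))) (fun k _ _ => sq_nonneg (x k))
        rw [Finset.sum_pair hijne] at h3
        exact h3
      have hbound := aux_bound ε t (x i) (x j) (∑ k, x k ^ 2) habs h3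
      have habs' := (abs_le.mp hbound).1
      exact aux_pos c ε (x ⬝ᵥ Θ *ᵥ x) (t * (x i * x j + x j * x i)) (∑ k, x k ^ 2)
        hq hsum_pos hεc habs' hcpos
  -- entrywise l1 sum
  have hl1 : ∑ k, ∑ l, |Ψ k l| = (∑ k, ∑ l, |Θ k l|) + 2 * ε := by
    have hent : ∀ k l, |Ψ k l| = |Θ k l| +
        ((if k = i ∧ l = j then ε else 0) + (if k = j ∧ l = i then ε else 0)) := by
      intro k l
      simp only [hΨdef, Matrix.add_apply, Matrix.smul_apply, hE, Matrix.of_apply, smul_eq_mul]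
      by_cases h1 : k = i ∧ l = j
      · obtain ⟨rfl, rfl⟩ := h1
        simp [hijne, hΘij, habs]
      · by_cases h2 : k = j ∧ l = i
        · obtain ⟨rfl, rfl⟩ := h2
          simp [hijne, Ne.symm hijne, hΘji, habs, h1]
        · simp [h1, h2]
    have hsum2 : ∀ (a b : Fin p) (r : ℝ), (∑ k, ∑ l, if k = a ∧ l = b then r else 0) = r := by
      intro a b r
      have hin : ∀ k : Fin p, (∑ l : Fin p, if k = a ∧ l = b then r else 0)
          = if k = a then r else 0 := by
        intro k; by_cases h : k = a <;> simp [h]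
      simp [hin]
    simp only [hent, Finset.sum_add_distrib]
    rw [hsum2 i j ε, hsum2 j i ε]
    ring
  -- trace
  have htr : (S * Ψ).trace = (S * Θ).trace + t * (2 * S i j) := by
    rw [hΨdef, Matrix.mul_add, Matrix.trace_add, Matrix.mul_smul, Matrix.trace_smul, smul_eq_mul]
    have htrE : (S * E).trace = 2 * S i j := by
      simp only [Matrix.trace, Matrix.diag_apply, Matrix.mul_apply, hE, Matrix.of_apply, mul_add,
        Finset.sum_add_distrib, mul_ite, mul_one, mul_zero, ite_and]
      have g1 : ∀ k, (∑ l : Fin p, if l = i then if k = j then S k l else 0 else 0)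
          = if k = j then S k i else 0 := by
        intro k; by_cases h : k = j <;> simp [h, Finset.sum_ite_eq']
      have g2 : ∀ k, (∑ l : Fin p, if l = j then if k = i then S k l else 0 else 0)
          = if k = i then S k j else 0 := by
        intro k; by_cases h : k = i <;> simp [h, Finset.sum_ite_eq']
      rw [Finset.sum_congr rfl (fun k _ => g1 k), Finset.sum_congr rfl (fun k _ => g2 k)]
      rw [Finset.sum_ite_eq' Finset.univ j (fun k => S k i),
          Finset.sum_ite_eq' Finset.univ i (fun k => S k j)]
      simp [hSsym]
      ring
    rw [htrE]
  -- determinant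
  have hdetΨ : Ψ.det = D + t * (t * d) := by
    rw [hΨdef, aux_det_expand Θ i j hijne t, hadjij, hadjji, ← hDdef, ← hddef]
    ring
  -- assemble
  have hineq := hopt Ψ hΨpos
  rw [glassoObj, glassoObj, hl1, htr, hdetΨ] at hineq
  have hΨdet_pos : 0 < D + t * (t * d) := by rw [← hdetΨ]; exact hΨpos.det_pos
  have hlog : Real.log (D + t * (t * d)) ≤ Real.log D - 2 * ε * δ := by
    have h7 : t * (2 * S i j) = -(2 * ε * |S i j|) := by
      have : t * (2 * S i j) = 2 * (t * S i j) := by ring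
      rw [this, htS]; ring
    rw [h7] at hineq
    rw [hδdef]
    linarith [hineq]
  have h8 : D + t * (t * d) ≤ D / Real.exp (2*ε*δ) := by
    have h81 := Real.exp_le_exp.mpr hlog
    rw [Real.exp_log hΨdet_pos, Real.exp_sub, Real.exp_log hdet0] at h81
    exact h81
  have h9 : 1 + 2*ε*δ ≤ Real.exp (2*ε*δ) := by
    have := Real.add_one_le_exp (2*ε*δ); linarith
  have hexp_pos : 0 < Real.exp (2*ε*δ) := Real.exp_pos _
  have h10 : D - ε * ε * |d| ≤ D + t * (t * d) := by
    have ht3 : t * (t * d) = (ε * ε) * d := by rw [← ht2]; ring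
    rw [ht3]
    have h101 := mul_le_mul_of_nonneg_left (neg_abs_le d) (mul_nonneg hεpos.le hεpos.le)
    linarith [h101]
  have hone : (0:ℝ) ≤ 1 + 2 * ε * δ := by
    have := mul_pos hεpos hδpos; linarith
  have h11 : (D - ε * ε * |d|) * (1 + 2 * ε * δ) ≤ D := by
    have e1 : (D - ε * ε * |d|) * (1 + 2 * ε * δ) ≤ (D + t * (t * d)) * (1 + 2 * ε * δ) :=
      mul_le_mul_of_nonneg_right h10 hone
    have e2 : (D + t * (t * d)) * (1 + 2 * ε * δ) ≤
        (D / Real.exp (2 * ε * δ)) * Real.exp (2 * ε * δ) :=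
      mul_le_mul h8 h9 hone (le_of_lt (div_pos hdet0 hexp_pos))
    have e3 : (D / Real.exp (2 * ε * δ)) * Real.exp (2 * ε * δ) = D :=
      div_mul_cancel₀ D hexp_pos.ne'
    rw [e3] at e2
    exact le_trans e1 e2
  exact aux_final ε δ D |d| hεpos hδpos hdet0 (abs_nonneg d) hε1 h11 hεd
end

section
/- Let λ > 0, let Θ̂ be a graphical lasso solution at λ for S, and let Ŵ = Θ̂⁻¹. Then for all indices i ≠ j with Θ̂_ij = 0, one has |S_ij − Ŵ_ij| ≤ λ. -/
open Matrix

def pertD {p : ℕ} (i j : Fin p) : Matrix (Fin p) (Fin p) ℝ :=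
  Matrix.of fun a b => (if a = i ∧ b = j then (1:ℝ) else 0) + (if a = j ∧ b = i then 1 else 0)

lemma pertD_quad {p : ℕ} (i j : Fin p) (x : Fin p → ℝ) :
    x ⬝ᵥ (pertD i j) *ᵥ x = 2 * (x i * x j) := by
  simp only [pertD, mulVec, dotProduct, Matrix.of_apply, add_mul, ite_mul, one_mul, zero_mul,
    Finset.sum_add_distrib, ite_and, Finset.sum_ite_eq', Finset.mem_univ, if_true,
    mul_add, mul_ite, mul_zero, Finset.sum_ite_irrel, Finset.sum_const_zero]
  ring

lemma pertD_trace_mul {p : ℕ} (A : Matrix (Fin p) (Fin p) ℝ) (i j : Fin p) :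
    (A * pertD i j).trace = A j i + A i j := by
  simp only [Matrix.trace, Matrix.diag, Matrix.mul_apply, pertD, Matrix.of_apply, mul_add,
    mul_ite, mul_one, mul_zero, Finset.sum_add_distrib, ite_and, Finset.sum_ite_eq',
    Finset.mem_univ, if_true, Finset.sum_ite_eq, Finset.sum_ite_irrel, Finset.sum_const_zero]

lemma pertD_symm {p : ℕ} (i j : Fin p) : (pertD i j)ᵀ = pertD i j := by
  ext a b
  simp only [transpose_apply, pertD, Matrix.of_apply]
  rw [add_comm]
  congr 1 <;> simp [and_comm]

lemma pertD_herm {p : ℕ} (i j : Fin p) : (pertD i j).IsHermitian := by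
  ext a b
  simp only [conjTranspose_apply, pertD, Matrix.of_apply, star_trivial]
  rw [add_comm]
  congr 1 <;> simp [and_comm]

lemma pertD_sum_abs {p : ℕ} (Θ : Matrix (Fin p) (Fin p) ℝ) (i j : Fin p) (hij : i ≠ j)
    (h1 : Θ i j = 0) (h2 : Θ j i = 0) (t : ℝ) :
    ∑ a, ∑ b, |(Θ + t • pertD i j) a b| = (∑ a, ∑ b, |Θ a b|) + 2 * |t| := by
  have key : ∀ a b, |(Θ + t • pertD i j) a b| =
      |Θ a b| + ((if a = i ∧ b = j then (1:ℝ) else 0) + (if a = j ∧ b = i then 1 else 0)) * |t| := by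
    intro a b
    rcases eq_or_ne a i with rfl | hai
    · rcases eq_or_ne b j with rfl | hbj
      · simp [Matrix.add_apply, pertD, h1, hij, abs_mul, mul_comm]
      · simp [Matrix.add_apply, pertD, hbj, hij]
    · rcases eq_or_ne a j with rfl | haj
      · rcases eq_or_ne b i with rfl | hbi
        · simp [Matrix.add_apply, pertD, h2, hij, Ne.symm hij, abs_mul, mul_comm]
        · simp [Matrix.add_apply, pertD, hbi, Ne.symm hij]
      · simp [Matrix.add_apply, pertD, hai, haj]
  simp only [key, Finset.sum_add_distrib]
  congr 1
  simp only [add_mul, ite_mul, one_mul, zero_mul, Finset.sum_add_distrib, ite_and,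
    Finset.sum_ite_irrel, Finset.sum_const_zero, Finset.sum_ite_eq', Finset.mem_univ, if_true]
  ring

lemma posDef_quad_lb {p : ℕ} (hp : 1 ≤ p) {Θ : Matrix (Fin p) (Fin p) ℝ} (hΘ : Θ.PosDef) :
    ∃ c > 0, ∀ x : Fin p → ℝ, c * ∑ k, x k ^ 2 ≤ x ⬝ᵥ Θ *ᵥ x := by
  set K : Set (Fin p → ℝ) := {x | ∑ k, x k ^ 2 = 1} with hK
  have hf : Continuous fun x : Fin p → ℝ => x ⬝ᵥ Θ *ᵥ x := by
    unfold dotProduct mulVec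
    exact continuous_finset_sum _ fun k _ => (continuous_apply k).mul
      (continuous_finset_sum _ fun l _ => continuous_const.mul (continuous_apply l))
  have hKc : IsCompact K := by
    apply Metric.isCompact_of_isClosed_isBounded
    · exact isClosed_eq (continuous_finset_sum _ fun k _ => (continuous_apply k).pow 2)
        continuous_const
    · rw [Metric.isBounded_iff_subset_closedBall 0]
      refine ⟨1, fun x hx => ?_⟩
      simp only [Metric.mem_closedBall, dist_zero_right]
      rw [pi_norm_le_iff_of_nonneg zero_le_one]
      intro k
      rw [Real.norm_eq_abs]
      have : x k ^ 2 ≤ 1 := by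
        calc x k ^ 2 ≤ ∑ l, x l ^ 2 := Finset.single_le_sum (f := fun l => x l ^ 2) (fun l _ => sq_nonneg _) (Finset.mem_univ k)
        _ = 1 := hx
      nlinarith [abs_nonneg (x k), sq_abs (x k)]
  have hKne : K.Nonempty := by
    refine ⟨Pi.single ⟨0, hp⟩ 1, ?_⟩
    simp [hK, Pi.single_apply]
  obtain ⟨u, huK, hmin⟩ := hKc.exists_isMinOn hKne hf.continuousOn
  have hune : u ≠ 0 := by
    intro h
    rw [hK] at huK
    simp [h] at huK
  have hc : 0 < u ⬝ᵥ Θ *ᵥ u := by simpa using hΘ.dotProduct_mulVec_pos hune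
  refine ⟨_, hc, fun x => ?_⟩
  by_cases hx : x = 0
  · simp [hx]
  · have hs : 0 < ∑ k, x k ^ 2 := by
      obtain ⟨k, hk⟩ := Function.ne_iff.mp hx
      exact Finset.sum_pos' (fun l _ => sq_nonneg _) ⟨k, Finset.mem_univ k, by simp at hk; positivity⟩
    set n := Real.sqrt (∑ k, x k ^ 2) with hn
    have hnpos : 0 < n := Real.sqrt_pos.mpr hs
    have hn2 : n ^ 2 = ∑ k, x k ^ 2 := Real.sq_sqrt hs.le
    have hmem : (n⁻¹ • x) ∈ K := by
      rw [hK]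
      simp only [Set.mem_setOf_eq, Pi.smul_apply, smul_eq_mul, mul_pow, ← Finset.mul_sum]
      rw [← hn2]
      field_simp
    have := hmin hmem
    have hquad : (n⁻¹ • x) ⬝ᵥ Θ *ᵥ (n⁻¹ • x) = n⁻¹ * (n⁻¹ * (x ⬝ᵥ Θ *ᵥ x)) := by
      rw [Matrix.mulVec_smul, smul_dotProduct, dotProduct_smul]
      simp [smul_eq_mul]
    rw [isMinOn_iff] at hmin
    have h2 := hmin _ hmem
    rw [hquad] at h2
    have hn2' : (0:ℝ) < n ^ 2 := by positivity
    have key : n⁻¹ * (n⁻¹ * (x ⬝ᵥ Θ *ᵥ x)) * n ^ 2 = x ⬝ᵥ Θ *ᵥ x := by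
      have hne := hnpos.ne'
      rw [pow_two]
      field_simp
    have h3 := mul_le_mul_of_nonneg_right h2 hn2'.le
    rw [key] at h3
    rw [← hn2]; linarith

/-- KKT, inactive entries: if `Θ i j = 0` for `i ≠ j`, then
`|S i j - (Θ⁻¹) i j| ≤ lam`. -/
theorem glasso_kkt_zero_entries
    (p : ℕ) (hp : 1 ≤ p) (S : Matrix (Fin p) (Fin p) ℝ) (hS : S.PosSemidef)
    (lam : ℝ) (hlam : 0 < lam)
    (Θ : Matrix (Fin p) (Fin p) ℝ) (hΘ : IsGlassoSol lam S Θ)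
    (W : Matrix (Fin p) (Fin p) ℝ) (hW : W = Θ⁻¹) :
    ∀ i j : Fin p, i ≠ j → Θ i j = 0 → |S i j - W i j| ≤ lam := by
  intro i j hij hΘij
  obtain ⟨hPD, hmin⟩ := hΘ
  have hΘji : Θ j i = 0 := by
    have := hPD.1.apply i j
    simp only [star_trivial] at this
    rw [this, hΘij]
  have hSsym : S j i = S i j := by
    have := hS.1.apply i j
    simpa using this
  have hdetΘ : 0 < Θ.det := hPD.det_pos
  have hdu : IsUnit Θ.det := isUnit_iff_ne_zero.mpr hdetΘ.ne'
  have hWsym : W j i = W i j := by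
    have := hPD.1.inv.apply i j
    simpa [hW] using this
  obtain ⟨c, hcpos, hcb⟩ := posDef_quad_lb hp hPD
  -- positive definiteness of the perturbation
  have hPDpert : ∀ t : ℝ, |t| < c → (Θ + t • pertD i j).PosDef := by
    intro t ht
    refine Matrix.PosDef.of_dotProduct_mulVec_pos ?_ ?_
    · exact hPD.1.add (by simp [Matrix.IsHermitian, Matrix.conjTranspose_smul,
        pertD_symm i j])
    · intro x hx
      have hb := hcb x
      have hspos : 0 < ∑ k, x k ^ 2 := by
        obtain ⟨k, hk⟩ := Function.ne_iff.mp hx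
        exact Finset.sum_pos' (fun l _ => sq_nonneg _)
          ⟨k, Finset.mem_univ k, by simp at hk; positivity⟩
      have hquad : x ⬝ᵥ (Θ + t • pertD i j) *ᵥ x
          = x ⬝ᵥ Θ *ᵥ x + t * (2 * (x i * x j)) := by
        rw [Matrix.add_mulVec, dotProduct_add, Matrix.smul_mulVec, dotProduct_smul,
          smul_eq_mul, pertD_quad]
      have hsub : x i ^ 2 + x j ^ 2 ≤ ∑ k, x k ^ 2 := by
        have h1 : ∑ k ∈ ({i, j} : Finset (Fin p)), x k ^ 2 ≤ ∑ k, x k ^ 2 :=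
          Finset.sum_le_sum_of_subset_of_nonneg (Finset.subset_univ _)
            (fun k _ _ => sq_nonneg _)
        rwa [Finset.sum_pair hij] at h1
      have h2xy : |2 * (x i * x j)| ≤ x i ^ 2 + x j ^ 2 := by
        rcases abs_cases (2 * (x i * x j)) with ⟨he, _⟩ | ⟨he, _⟩ <;> rw [he] <;>
          nlinarith [sq_nonneg (x i - x j), sq_nonneg (x i + x j)]
      have hlow : -(|t| * (∑ k, x k ^ 2)) ≤ t * (2 * (x i * x j)) := by
        have h1 : -(|t| * |2 * (x i * x j)|) ≤ t * (2 * (x i * x j)) := by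
          rw [← abs_mul]; exact neg_abs_le _
        have h2 : |t| * |2 * (x i * x j)| ≤ |t| * (∑ k, x k ^ 2) :=
          mul_le_mul_of_nonneg_left (le_trans h2xy hsub) (abs_nonneg t)
        linarith
      simp only [star_trivial]
      rw [hquad]
      nlinarith [mul_pos (sub_pos.mpr ht) hspos]
  -- factorization of the determinant
  set M := Θ⁻¹ * pertD i j with hM
  have hfact : ∀ t : ℝ, Θ + t • pertD i j = Θ * (1 + t • M) := by
    intro t
    rw [Matrix.mul_add, Matrix.mul_one, Matrix.mul_smul, hM, ← Matrix.mul_assoc,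
      Matrix.mul_nonsing_inv Θ hdu, Matrix.one_mul]
  set q : Polynomial ℝ :=
    (Matrix.det (1 + (Polynomial.X : Polynomial ℝ) • M.map Polynomial.C)).divX.divX with hq
  set a : ℝ := M.trace with ha
  set r : ℝ → ℝ := fun t => 1 + a * t + q.eval t * t ^ 2 with hr
  have hdetpert : ∀ t : ℝ, (Θ + t • pertD i j).det = Θ.det * r t := by
    intro t
    rw [hfact, Matrix.det_mul, Matrix.det_one_add_smul t M]
  set h : ℝ → ℝ := fun t => -Real.log (r t) + 2 * S i j * t with hh
  -- the key inequality from minimality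
  have key : ∀ t : ℝ, |t| < c → 0 ≤ h t + 2 * lam * |t| := by
    intro t ht
    have hpd' := hPDpert t ht
    have hineq := hmin _ hpd'
    have hrt : 0 < r t := by
      have hd := hpd'.det_pos
      rw [hdetpert t] at hd
      nlinarith
    have htrace : (S * (Θ + t • pertD i j)).trace = (S * Θ).trace + t * (2 * S i j) := by
      rw [Matrix.mul_add, Matrix.trace_add, Matrix.mul_smul, Matrix.trace_smul,
        pertD_trace_mul, hSsym]
      rw [smul_eq_mul]; ring
    have hsum := pertD_sum_abs Θ i j hij hΘij hΘji t
    have hlogdet : Real.log ((Θ + t • pertD i j).det)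
        = Real.log Θ.det + Real.log (r t) := by
      rw [hdetpert t, Real.log_mul hdetΘ.ne' hrt.ne']
    unfold glassoObj at hineq
    rw [htrace, hsum, hlogdet] at hineq
    simp only [hh]
    nlinarith
  -- differentiability
  have hqd : HasDerivAt (fun t : ℝ => Polynomial.eval t q)
      (Polynomial.eval 0 (Polynomial.derivative q)) 0 := q.hasDerivAt 0
  have hpow : HasDerivAt (fun t : ℝ => t ^ 2) 0 0 := by
    simpa using hasDerivAt_pow 2 (0:ℝ)
  have hrd : HasDerivAt r a 0 := by
    have h1 : HasDerivAt (fun t : ℝ => a * t) a 0 := by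
      simpa using (hasDerivAt_id (0:ℝ)).const_mul a
    have h2 := hqd.mul hpow
    have h3 := (h1.const_add 1).add h2
    convert h3 using 1 <;> first | rfl | simp
  have hr0 : r 0 = 1 := by simp [hr]
  have hlogd : HasDerivAt (fun t : ℝ => Real.log (r t)) a 0 := by
    have := (Real.hasDerivAt_log (by rw [hr0]; norm_num)).comp 0 hrd
    convert this using 1 <;> first | rfl | simp [hr0]
  have hhd : HasDerivAt h (-a + 2 * S i j) 0 := by
    have h2 : HasDerivAt (fun t : ℝ => 2 * S i j * t) (2 * S i j) 0 := by
      simpa using (hasDerivAt_id (0:ℝ)).const_mul (2 * S i j)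
    exact hlogd.neg.add h2
  have h00 : h 0 = 0 := by simp [hh, hr0]
  -- from the key inequality and the derivative, bound the derivative
  set d : ℝ := -a + 2 * S i j with hd
  have hT := hasDerivAt_iff_tendsto_slope.mp hhd
  have hslope : ∀ t : ℝ, t ≠ 0 → slope h 0 t = h t / t := by
    intro t ht
    rw [slope_def_field]
    simp [h00]
  have hge : -(2 * lam) ≤ d := by
    have T : Filter.Tendsto (slope h 0) (nhdsWithin 0 (Set.Ioi 0)) (nhds d) :=
      hT.mono_left (nhdsWithin_mono 0 (fun x hx =>
        Set.mem_compl_singleton_iff.mpr (ne_of_gt hx)))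
    refine ge_of_tendsto T ?_
    filter_upwards [Ioo_mem_nhdsGT hcpos] with t ht
    have hk := key t (by rw [abs_of_pos ht.1]; exact ht.2)
    rw [abs_of_pos ht.1] at hk
    rw [hslope t ht.1.ne', le_div_iff₀ ht.1]
    linarith
  have hle : d ≤ 2 * lam := by
    have T : Filter.Tendsto (slope h 0) (nhdsWithin 0 (Set.Iio 0)) (nhds d) :=
      hT.mono_left (nhdsWithin_mono 0 (fun x hx =>
        Set.mem_compl_singleton_iff.mpr (ne_of_lt hx)))
    refine le_of_tendsto T ?_
    filter_upwards [Ioo_mem_nhdsLT (neg_lt_zero.mpr hcpos)]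
      with t ht
    have habs : |t| = -t := abs_of_neg ht.2
    have hk := key t (by rw [habs]; linarith [ht.1])
    rw [habs] at hk
    rw [hslope t ht.2.ne, div_le_iff_of_neg ht.2]
    linarith
  -- identify the derivative
  have haW : a = 2 * W i j := by
    rw [ha, hM, pertD_trace_mul, ← hW, hWsym]
    ring
  have : |d| ≤ 2 * lam := abs_le.mpr ⟨by linarith, hle⟩
  have hdval : d = 2 * (S i j - W i j) := by rw [hd, haW]; ring
  rw [hdval, abs_mul, abs_two] at this
  linarith [abs_nonneg (S i j - W i j)]
end

section
/- Let λ > 0, let Θ̂ be a graphical lasso solution at λ for S, and let Ŵ = Θ̂⁻¹. Then for all indices i, j: if Θ̂_ij > 0 then Ŵ_ij = S_ij + λ, and if Θ̂_ij < 0 then Ŵ_ij = S_ij − λ. -/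
open Matrix Polynomial

lemma hasDerivAt_det_one_add_smul' {p : ℕ} (M : Matrix (Fin p) (Fin p) ℝ) :
    HasDerivAt (fun t : ℝ => (1 + t • M).det) M.trace 0 := by
  have key : (fun t : ℝ => (1 + t • M).det)
      = fun t : ℝ => 1 + M.trace * t +
        ((1 + (X : ℝ[X]) • M.map C).det).divX.divX.eval t * t ^ 2 := by
    funext t; exact Matrix.det_one_add_smul t M
  rw [key]
  have h1 : HasDerivAt (fun t : ℝ => 1 + M.trace * t) M.trace 0 := by
    simpa using ((hasDerivAt_id (0:ℝ)).const_mul M.trace).const_add 1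
  have h2 : HasDerivAt (fun t : ℝ =>
      ((1 + (X : ℝ[X]) • M.map C).det).divX.divX.eval t * t ^ 2) 0 0 := by
    have := (((1 + (X : ℝ[X]) • M.map C).det).divX.divX.hasDerivAt (0:ℝ)).mul
      (hasDerivAt_pow 2 (0:ℝ))
    simpa [Pi.mul_def] using this
  simpa [Pi.add_def] using h1.add h2

lemma hasDerivAt_abs_line' (a b : ℝ) (h : b ≠ 0 → a ≠ 0) :
    HasDerivAt (fun t : ℝ => |a + t * b|) (if 0 < a then b else -b) 0 := by
  rcases eq_or_ne b 0 with hb | hb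
  · have : (fun t : ℝ => |a + t * b|) = fun _ => |a| := by funext t; simp [hb]
    rw [this, hb]
    simpa using hasDerivAt_const (0:ℝ) |a|
  · have ha := h hb
    have hlin : HasDerivAt (fun t : ℝ => a + t * b) b 0 := by
      simpa using ((hasDerivAt_id (0:ℝ)).mul_const b).const_add a
    have hcont : Filter.Tendsto (fun t : ℝ => a + t * b) (nhds 0) (nhds a) := by
      simpa using hlin.continuousAt.tendsto
    rcases ha.lt_or_gt with hneg | hpos
    · have hev : ∀ᶠ t in nhds (0:ℝ), a + t * b < 0 := hcont.eventually (eventually_lt_nhds hneg)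
      have heq : (fun t : ℝ => |a + t * b|) =ᶠ[nhds (0:ℝ)] fun t => -(a + t * b) :=
        hev.mono fun t ht => abs_of_neg ht
      have := (hlin.neg).congr_of_eventuallyEq heq
      simpa [if_neg (not_lt.mpr hneg.le)] using this
    · have hev : ∀ᶠ t in nhds (0:ℝ), 0 < a + t * b := hcont.eventually (eventually_gt_nhds hpos)
      have heq : (fun t : ℝ => |a + t * b|) =ᶠ[nhds (0:ℝ)] fun t => a + t * b :=
        hev.mono fun t ht => abs_of_pos ht
      have := hlin.congr_of_eventuallyEq heq
      simpa [if_pos hpos] using this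

lemma posDef_quad_lower' {p : ℕ} (hp : 1 ≤ p) {Θ : Matrix (Fin p) (Fin p) ℝ} (h : Θ.PosDef) :
    ∃ c > 0, ∀ x : Fin p → ℝ, c * (∑ k, x k ^ 2) ≤ x ⬝ᵥ Θ *ᵥ x := by
  haveI : Nonempty (Fin p) := ⟨⟨0, hp⟩⟩
  have hppos : (0:ℝ) < p := by exact_mod_cast hp
  set f : (Fin p → ℝ) → ℝ := fun x => x ⬝ᵥ Θ *ᵥ x with hf
  have hcont : Continuous f := by
    apply continuous_finset_sum
    intro k _
    refine (continuous_apply k).mul ?_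
    simp only [Matrix.mulVec, dotProduct]
    apply continuous_finset_sum
    intro l _
    exact continuous_const.mul (continuous_apply l)
  have hsph : IsCompact (Metric.sphere (0 : Fin p → ℝ) 1) := isCompact_sphere _ _
  have hne : (Metric.sphere (0 : Fin p → ℝ) 1).Nonempty := by
    refine ⟨fun _ => 1, ?_⟩
    simp [mem_sphere_iff_norm]
  obtain ⟨u0, hu0, hmin⟩ := hsph.exists_isMinOn hne hcont.continuousOn
  have hu0n : ‖u0‖ = 1 := by simpa using hu0
  have hu0ne : u0 ≠ 0 := by
    intro h0; rw [h0] at hu0n; simp at hu0n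
  have hc0 : 0 < f u0 := by simpa using h.dotProduct_mulVec_pos hu0ne
  refine ⟨f u0 / p, div_pos hc0 hppos, ?_⟩
  intro x
  rcases eq_or_ne x 0 with rfl | hx
  · simp [hf]
  · have hxn : (0:ℝ) < ‖x‖ := norm_pos_iff.mpr hx
    set u : Fin p → ℝ := ‖x‖⁻¹ • x with hu
    have hun : ‖u‖ = 1 := norm_smul_inv_norm hx
    have humem : u ∈ Metric.sphere (0 : Fin p → ℝ) 1 := by simpa using hun
    have hfu : f u0 ≤ f u := hmin humem
    have hscale : f x = ‖x‖ ^ 2 * f u := by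
      have : x = ‖x‖ • u := by
        rw [hu, smul_smul, mul_inv_cancel₀ hxn.ne', one_smul]
      calc f x = (‖x‖ • u) ⬝ᵥ Θ *ᵥ (‖x‖ • u) := by rw [← this]
        _ = ‖x‖ ^ 2 * f u := by
            rw [Matrix.mulVec_smul, smul_dotProduct, dotProduct_smul]
            simp [hf]; ring
    have hsum : (∑ k, x k ^ 2) ≤ p * ‖x‖ ^ 2 := by
      calc (∑ k, x k ^ 2) ≤ ∑ _k : Fin p, ‖x‖ ^ 2 := by
            apply Finset.sum_le_sum
            intro k _
            have := norm_le_pi_norm x k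
            calc x k ^ 2 = ‖x k‖ ^2 := by rw [Real.norm_eq_abs, sq_abs]
              _ ≤ ‖x‖ ^ 2 := pow_le_pow_left₀ (norm_nonneg _) this 2
        _ = p * ‖x‖ ^ 2 := by simp [Finset.sum_const, nsmul_eq_mul]
    calc f u0 / p * (∑ k, x k ^ 2) ≤ f u0 / p * (p * ‖x‖ ^ 2) := by
          apply mul_le_mul_of_nonneg_left hsum (le_of_lt (div_pos hc0 hppos))
      _ = f u0 * ‖x‖ ^ 2 := by field_simp
      _ ≤ f u * ‖x‖ ^ 2 := by nlinarith
      _ = f x := by rw [hscale]; ring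
      _ = x ⬝ᵥ Θ *ᵥ x := rfl

lemma glasso_kkt_aux {p : ℕ} (hp : 1 ≤ p) (S : Matrix (Fin p) (Fin p) ℝ)
    (hSsym : S.IsHermitian) (lam : ℝ) (hlam : 0 < lam) (Θ : Matrix (Fin p) (Fin p) ℝ)
    (hΘ : IsGlassoSol lam S Θ)
    (i j : Fin p) (ε : ℝ) (hε : ε = 1 ∨ ε = -1) (hsign : 0 < ε * Θ i j) :
    Θ⁻¹ i j = S i j + ε * lam := by
  have hΘpd := hΘ.1
  have hΘji : Θ j i = Θ i j := by simpa using hΘpd.1.apply i j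
  set E : Matrix (Fin p) (Fin p) ℝ := Matrix.single i j ε + Matrix.single j i ε with hE
  have hEherm : E.IsHermitian := by
    ext a b
    simp [hE, Matrix.conjTranspose_apply, Matrix.single, Matrix.add_apply]
    rw [add_comm]
    congr 1 <;> simp [and_comm]
  have htrE : ∀ A : Matrix (Fin p) (Fin p) ℝ, (A * E).trace = ε * A j i + ε * A i j := by
    intro A
    simp [hE, Matrix.mul_add, Matrix.trace_add, Matrix.trace, Matrix.diag, Matrix.mul_apply,
      Matrix.single, mul_add, mul_ite, mul_zero, ite_and, zero_mul, ite_mul,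
      Finset.sum_add_distrib, Finset.sum_ite_eq, Finset.sum_ite_eq', eq_comm]
    ring
  have hEsum : (∑ k, ∑ l, E k l) = ε + ε := by
    simp [hE, Matrix.add_apply, Matrix.single, ite_and, Finset.sum_add_distrib,
      Finset.sum_ite_eq, Finset.sum_ite_eq']
  have hquadE : ∀ x : Fin p → ℝ, x ⬝ᵥ E *ᵥ x = ε * (x i * x j) + ε * (x j * x i) := by
    intro x
    simp [hE, Matrix.mulVec, dotProduct, Matrix.add_apply,
      Matrix.single, Finset.mul_sum, mul_add, add_mul, mul_ite, ite_mul, mul_zero,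
      zero_mul, ite_and, Finset.sum_add_distrib, Finset.sum_ite_eq, Finset.sum_ite_eq', eq_comm]
    ring
  obtain ⟨c, hc, hlow⟩ := posDef_quad_lower' hp hΘpd
  -- perturbations stay positive definite
  have hpert : ∀ t : ℝ, |t| < c / 2 → (Θ + t • E).PosDef := by
    intro t ht
    rw [Matrix.posDef_iff_dotProduct_mulVec]
    constructor
    · show (Θ + t • E)ᴴ = Θ + t • E
      rw [Matrix.conjTranspose_add, Matrix.conjTranspose_smul, hΘpd.1, hEherm]
      simp
    · intro x hx
      have hsq : 0 < ∑ k, x k ^ 2 := by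
        obtain ⟨k, hk⟩ := Function.ne_iff.mp hx
        refine Finset.sum_pos' (fun l _ => sq_nonneg _) ⟨k, Finset.mem_univ k, ?_⟩
        exact lt_of_le_of_ne (sq_nonneg _) (Ne.symm (pow_ne_zero 2 hk))
      have h1 := hlow x
      have h2 : |x ⬝ᵥ E *ᵥ x| ≤ 2 * ∑ k, x k ^ 2 := by
        rw [hquadE x]
        have hxi : x i ^ 2 ≤ ∑ k, x k ^ 2 :=
          Finset.single_le_sum (fun l _ => sq_nonneg (x l)) (Finset.mem_univ i)
        have hxj : x j ^ 2 ≤ ∑ k, x k ^ 2 :=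
          Finset.single_le_sum (fun l _ => sq_nonneg (x l)) (Finset.mem_univ j)
        have hε1 : |ε| = 1 := by rcases hε with rfl | rfl <;> norm_num
        rw [abs_le]
        constructor <;> nlinarith [sq_nonneg (x i - x j), sq_nonneg (x i + x j), abs_nonneg ε,
          neg_abs_le ε, le_abs_self ε]
      have key : x ⬝ᵥ (Θ + t • E) *ᵥ x = x ⬝ᵥ Θ *ᵥ x + t * (x ⬝ᵥ E *ᵥ x) := by
        rw [Matrix.add_mulVec, dotProduct_add, Matrix.smul_mulVec,
          dotProduct_smul, smul_eq_mul]
      show 0 < star x ⬝ᵥ (Θ + t • E) *ᵥ x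
      have hstar : star x = x := by simp
      rw [hstar, key]
      nlinarith [neg_abs_le (t * (x ⬝ᵥ E *ᵥ x)), abs_mul t (x ⬝ᵥ E *ᵥ x),
        abs_nonneg t, abs_nonneg (x ⬝ᵥ E *ᵥ x)]
  -- 0 is a local minimum of the objective along the line Θ + t E
  have hloc : IsLocalMin (fun t : ℝ => glassoObj lam S (Θ + t • E)) 0 := by
    rw [IsLocalMin, IsMinFilter]
    rw [Metric.eventually_nhds_iff]
    refine ⟨c / 2, half_pos hc, fun t ht => ?_⟩
    have h1 : |t| < c / 2 := by rwa [Real.dist_0_eq_abs] at ht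
    have := hΘ.2 (Θ + t • E) (hpert t h1)
    simpa using this
  -- derivative of the objective along the line
  have hdetu : IsUnit Θ.det := (hΘpd.det_pos.ne').isUnit
  have hfac : ∀ t : ℝ, Θ + t • E = Θ * (1 + t • (Θ⁻¹ * E)) := by
    intro t
    rw [Matrix.mul_add, Matrix.mul_one, Matrix.mul_smul, ← Matrix.mul_assoc,
      Matrix.mul_nonsing_inv _ hdetu, Matrix.one_mul]
  have hdet : HasDerivAt (fun t : ℝ => (Θ + t • E).det) (Θ.det * (Θ⁻¹ * E).trace) 0 := by
    have heq : (fun t : ℝ => (Θ + t • E).det)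
        = fun t : ℝ => Θ.det * (1 + t • (Θ⁻¹ * E)).det := by
      funext t; rw [hfac t, Matrix.det_mul]
    rw [heq]
    exact (hasDerivAt_det_one_add_smul' (Θ⁻¹ * E)).const_mul Θ.det
  have hd0 : (Θ + (0:ℝ) • E).det ≠ 0 := by simp [hΘpd.det_pos.ne']
  have hlog : HasDerivAt (fun t : ℝ => Real.log ((Θ + t • E).det)) ((Θ⁻¹ * E).trace) 0 := by
    have h := hdet.log hd0
    convert h using 1
    rw [zero_smul, add_zero, mul_comm, mul_div_assoc, div_self hΘpd.det_pos.ne', mul_one]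
  have htr : HasDerivAt (fun t : ℝ => (S * (Θ + t • E)).trace) ((S * E).trace) 0 := by
    have heq : (fun t : ℝ => (S * (Θ + t • E)).trace)
        = fun t : ℝ => (S * Θ).trace + t * (S * E).trace := by
      funext t
      rw [Matrix.mul_add, Matrix.mul_smul, Matrix.trace_add, Matrix.trace_smul, smul_eq_mul]
    rw [heq]
    simpa using ((hasDerivAt_id (0:ℝ)).mul_const ((S * E).trace)).const_add ((S * Θ).trace)
  have habs : HasDerivAt (fun t : ℝ => ∑ k, ∑ l, |(Θ + t • E) k l|)
      (∑ k, ∑ l, ε * E k l) 0 := by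
    have heq : (fun t : ℝ => ∑ k, ∑ l, |(Θ + t • E) k l|)
        = fun t : ℝ => ∑ k, ∑ l, |Θ k l + t * E k l| := by
      funext t; simp [Matrix.add_apply, Matrix.smul_apply, smul_eq_mul]
    rw [heq]
    apply HasDerivAt.fun_sum
    intro k _
    apply HasDerivAt.fun_sum
    intro l _
    have hval : E k l ≠ 0 → Θ k l = Θ i j := by
      intro h0
      by_cases h1 : k = i ∧ l = j
      · rw [h1.1, h1.2]
      · by_cases h2 : k = j ∧ l = i
        · rw [h2.1, h2.2, hΘji]
        · exfalso
          apply h0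
          simp only [hE, Matrix.add_apply, Matrix.single, Matrix.of_apply]
          rw [if_neg (fun h => h1 ⟨h.1.symm, h.2.symm⟩), if_neg (fun h => h2 ⟨h.1.symm, h.2.symm⟩),
            add_zero]
    have hΘne : Θ i j ≠ 0 := by
      intro hz; rw [hz, mul_zero] at hsign; exact lt_irrefl 0 hsign
    have hEne : E k l ≠ 0 → Θ k l ≠ 0 := fun h0 => by rw [hval h0]; exact hΘne
    have h := hasDerivAt_abs_line' (Θ k l) (E k l) hEne
    convert h using 1 <;> try rfl
    by_cases h0 : E k l = 0
    · by_cases h0' : 0 < Θ k l <;> simp [h0, h0']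
    · rw [hval h0]
      rcases hε with rfl | rfl
      · have : 0 < Θ i j := by linarith
        rw [if_pos this, one_mul]
      · have : ¬ 0 < Θ i j := by
          intro hgt; nlinarith
        rw [if_neg this]; ring
  have hφ : HasDerivAt (fun t : ℝ => glassoObj lam S (Θ + t • E))
      (-(Θ⁻¹ * E).trace + (S * E).trace + lam * ∑ k, ∑ l, ε * E k l) 0 := by
    have := (hlog.neg.add htr).add (habs.const_mul lam)
    simpa [glassoObj, Pi.add_def, Pi.neg_def] using this
  have hD0 := hloc.hasDerivAt_eq_zero hφ
  -- unpack the derivative identity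
  have hsum2 : (∑ k, ∑ l, ε * E k l) = ε * (ε + ε) := by
    rw [← hEsum]
    simp [Finset.mul_sum]
  have hinv : (Θ⁻¹).PosDef := hΘpd.inv
  have hWji : Θ⁻¹ j i = Θ⁻¹ i j := by simpa using hinv.1.apply i j
  have hSji : S j i = S i j := by simpa using hSsym.apply i j
  rw [htrE Θ⁻¹, htrE S, hsum2, hWji, hSji] at hD0
  rcases hε with rfl | rfl <;> nlinarith [hD0]


/-- KKT, active entries: if `Θ i j > 0` then `(Θ⁻¹) i j = S i j + lam`,
and if `Θ i j < 0` then `(Θ⁻¹) i j = S i j - lam`. -/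
theorem glasso_kkt_nonzero_entries
    (p : ℕ) (hp : 1 ≤ p) (S : Matrix (Fin p) (Fin p) ℝ) (hS : S.PosSemidef)
    (lam : ℝ) (hlam : 0 < lam)
    (Θ : Matrix (Fin p) (Fin p) ℝ) (hΘ : IsGlassoSol lam S Θ)
    (W : Matrix (Fin p) (Fin p) ℝ) (hW : W = Θ⁻¹) :
    ∀ i j : Fin p,
      (0 < Θ i j → W i j = S i j + lam) ∧ (Θ i j < 0 → W i j = S i j - lam) := by
  intro i j
  subst hW
  constructor
  · intro h
    have := glasso_kkt_aux hp S hS.1 lam hlam Θ hΘ i j 1 (Or.inl rfl) (by linarith)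
    simpa using this
  · intro h
    have := glasso_kkt_aux hp S hS.1 lam hlam Θ hΘ i j (-1) (Or.inr rfl) (by linarith)
    rw [this]; ring
end

section
/- Let λ > 0, let Θ̂ be a graphical lasso solution at λ for S, and let Ŵ = Θ̂⁻¹. Then every diagonal entry of Ŵ satisfies Ŵ_ii = S_ii + λ for i = 1,…,p. -/
open Matrix

/-- Cauchy–Schwarz-type bound: `(x i)² ≤ Θ⁻¹ i i * (xᵀ Θ x)` for `Θ` positive definite. -/
lemma glasso_quad_bound (p : ℕ) (Θ : Matrix (Fin p) (Fin p) ℝ) (hpd : Θ.PosDef) (i : Fin p)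
    (w : ℝ) (hwdef : Θ⁻¹ i i = w) (hw : 0 < w)
    (x : Fin p → ℝ) :
    (x i)^2 ≤ w * (x ⬝ᵥ Θ *ᵥ x) := by
  have hinv : Θ * Θ⁻¹ = 1 := Θ.mul_nonsing_inv (isUnit_iff_ne_zero.2 hpd.det_pos.ne')
  set u : Fin p → ℝ := Θ⁻¹ *ᵥ Pi.single i 1 with hu
  have hΘu : Θ *ᵥ u = Pi.single i 1 := by
    rw [hu, mulVec_mulVec, hinv, one_mulVec]
  have hui : u i = w := by simp [hu, mulVec_single, hwdef]
  have hsym : Θᵀ = Θ := by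
    ext j k; simpa using hpd.isHermitian.apply j k
  set s : ℝ := x i / w with hs
  have h0 : 0 ≤ (x - s • u) ⬝ᵥ Θ *ᵥ (x - s • u) := by
    simpa using hpd.posSemidef.dotProduct_mulVec_nonneg (x - s • u)
  have hexp : (x - s • u) ⬝ᵥ Θ *ᵥ (x - s • u)
      = x ⬝ᵥ Θ *ᵥ x - 2 * s * x i + s^2 * w := by
    have huΘx : u ⬝ᵥ Θ *ᵥ x = x i := by
      rw [dotProduct_mulVec, ← mulVec_transpose, hsym, hΘu]
      simp [dotProduct, Pi.single_apply]
    have hxΘu : x ⬝ᵥ Θ *ᵥ u = x i := by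
      rw [hΘu]; simp [dotProduct, Pi.single_apply]
    have huΘu : u ⬝ᵥ Θ *ᵥ u = w := by
      rw [hΘu]; simp [dotProduct, Pi.single_apply, hui]
    rw [mulVec_sub, dotProduct_sub, sub_dotProduct, sub_dotProduct]
    rw [mulVec_smul, dotProduct_smul, smul_dotProduct, smul_dotProduct]
    rw [dotProduct_smul, huΘx, hxΘu, huΘu]
    simp only [smul_eq_mul]; ring
  rw [hexp, hs] at h0
  have key : 2 * (x i / w) * x i - (x i / w)^2 * w = (x i)^2 / w := by
    field_simp; ring
  have h1 : (x i)^2 / w ≤ x ⬝ᵥ Θ *ᵥ x := by linarith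
  calc (x i)^2 = ((x i)^2 / w) * w := by field_simp
    _ ≤ (x ⬝ᵥ Θ *ᵥ x) * w := mul_le_mul_of_nonneg_right h1 hw.le
    _ = w * (x ⬝ᵥ Θ *ᵥ x) := by ring

lemma glasso_pert_posdef (p : ℕ) (Θ : Matrix (Fin p) (Fin p) ℝ) (hpd : Θ.PosDef) (i : Fin p)
    (w : ℝ) (t : ℝ) (ht : 0 < 1 + t * w)
    (hq : ∀ x : Fin p → ℝ, (x i)^2 ≤ w * (x ⬝ᵥ Θ *ᵥ x)) :
    (Θ + t • Matrix.single i i (1:ℝ)).PosDef := by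
  refine Matrix.PosDef.of_dotProduct_mulVec_pos ?_ ?_
  · refine hpd.isHermitian.add ?_
    show (t • Matrix.single i i (1:ℝ))ᴴ = _
    ext j k
    simp [Matrix.single, and_comm]
  · intro x hx
    have hxq : 0 < x ⬝ᵥ Θ *ᵥ x := by simpa using hpd.dotProduct_mulVec_pos hx
    have hE : x ⬝ᵥ ((t • Matrix.single i i (1:ℝ)) *ᵥ x) = t * (x i * x i) := by
      simp [dotProduct, mulVec, Matrix.single, ite_and, Finset.mul_sum, mul_comm,
        mul_left_comm]
    have : star x ⬝ᵥ ((Θ + t • Matrix.single i i (1:ℝ)) *ᵥ x)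
        = x ⬝ᵥ Θ *ᵥ x + t * (x i * x i) := by
      rw [add_mulVec, star_trivial, dotProduct_add, hE]
    rw [this]
    rcases le_or_gt 0 t with h | h
    · nlinarith
    · have := hq x
      nlinarith [sq_nonneg (x i)]

lemma glasso_pert_det (p : ℕ) (Θ : Matrix (Fin p) (Fin p) ℝ) (hpd : Θ.PosDef) (i : Fin p)
    (w : ℝ) (hwdef : Θ⁻¹ i i = w) (t : ℝ) :
    (Θ + t • Matrix.single i i (1:ℝ)).det = Θ.det * (1 + t * w) := by
  have hsym : Θᵀ = Θ := by
    ext j k; simpa using hpd.isHermitian.apply j k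
  have hupd : Θ + t • Matrix.single i i (1:ℝ)
      = Θ.updateCol i (fun j => Θ j i + t * (Pi.single i (1:ℝ) : Fin p → ℝ) j) := by
    ext j k
    by_cases h : k = i
    · rw [h]
      by_cases hj : j = i <;>
        simp [updateCol_apply, Matrix.single, Pi.single_apply, hj, eq_comm]
    · simp only [updateCol_apply, if_neg h, Matrix.add_apply, Matrix.smul_apply, smul_eq_mul,
        Matrix.single, of_apply]
      rw [if_neg (fun hc => h hc.2.symm)]
      ring
  have hadj : (Θ.updateCol i (Pi.single i (1:ℝ))).det = Θ.adjugate i i := by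
    rw [adjugate_apply, ← det_transpose (Θ.updateRow i (Pi.single i 1)),
      ← updateCol_transpose, hsym]
  have hadj2 : Θ.adjugate i i = Θ.det * w := by
    have h1 : Θ⁻¹ = (Θ.det)⁻¹ • Θ.adjugate := by
      rw [inv_def, Ring.inverse_eq_inv']
    have := congrFun (congrFun h1 i) i
    rw [hwdef] at this
    simp only [Matrix.smul_apply, smul_eq_mul] at this
    field_simp [hpd.det_pos.ne'] at this ⊢
    linarith [this]
  have hfun : (fun j => Θ j i + t * (Pi.single i (1:ℝ) : Fin p → ℝ) j)
      = (fun j => Θ j i) + t • (Pi.single i (1:ℝ) : Fin p → ℝ) := by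
    funext j; simp
  rw [hupd, hfun, det_updateCol_add, updateCol_eq_self, det_updateCol_smul, hadj, hadj2]
  ring

lemma glasso_pert_trace (p : ℕ) (S Θ : Matrix (Fin p) (Fin p) ℝ) (i : Fin p) (t : ℝ) :
    (S * (Θ + t • Matrix.single i i (1:ℝ))).trace = (S * Θ).trace + t * S i i := by
  have hE : (S * Matrix.single i i (1:ℝ)).trace = S i i := by
    simp [trace, Matrix.mul_apply, Matrix.single, ite_and, diag, Finset.mul_sum]
  rw [Matrix.mul_add, trace_add, Matrix.mul_smul, trace_smul, hE, smul_eq_mul]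

lemma glasso_pert_abs (p : ℕ) (Θ : Matrix (Fin p) (Fin p) ℝ) (i : Fin p) (t : ℝ) :
    ∑ j, ∑ k, |(Θ + t • Matrix.single i i (1:ℝ)) j k|
      = (∑ j, ∑ k, |Θ j k|) + (|Θ i i + t| - |Θ i i|) := by
  have hterm : ∀ j k, |(Θ + t • Matrix.single i i (1:ℝ)) j k|
      = |Θ j k| + (if j = i ∧ k = i then |Θ i i + t| - |Θ i i| else 0) := by
    intro j k
    by_cases h : j = i ∧ k = i
    · rw [h.1, h.2, if_pos ⟨rfl, rfl⟩]
      have h2 : (t • Matrix.single i i (1:ℝ)) i i = t := by simp [Matrix.single]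
      rw [Matrix.add_apply, h2]
      ring
    · rw [if_neg h]
      have : (t • Matrix.single i i (1:ℝ)) j k = 0 := by
        simp only [Matrix.smul_apply, Matrix.single, of_apply, smul_eq_mul]
        rw [if_neg (fun hc => h ⟨hc.1.symm, hc.2.symm⟩)]
        ring
      rw [Matrix.add_apply, this, add_zero, add_zero]
  simp only [hterm]
  rw [show (∑ j, ∑ k, (|Θ j k| + (if j = i ∧ k = i then |Θ i i + t| - |Θ i i| else 0)))
      = (∑ j, ∑ k, |Θ j k|) + ∑ j, ∑ k, (if j = i ∧ k = i then |Θ i i + t| - |Θ i i| else 0) by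
    rw [← Finset.sum_add_distrib]
    exact Finset.sum_congr rfl fun j _ => by rw [← Finset.sum_add_distrib]]
  congr 1
  simp [ite_and, Finset.sum_ite_eq']

/-- the diagonal entries of `W = Θ⁻¹` satisfy `W i i = S i i + lam`. -/
theorem glasso_kkt_diagonal
    (p : ℕ) (hp : 1 ≤ p) (S : Matrix (Fin p) (Fin p) ℝ) (hS : S.PosSemidef)
    (lam : ℝ) (hlam : 0 < lam)
    (Θ : Matrix (Fin p) (Fin p) ℝ) (hΘ : IsGlassoSol lam S Θ)
    (W : Matrix (Fin p) (Fin p) ℝ) (hW : W = Θ⁻¹) :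
    ∀ i : Fin p, W i i = S i i + lam := by
  subst hW
  intro i
  obtain ⟨hpd, hmin⟩ := hΘ
  have hdet : 0 < Θ.det := hpd.det_pos
  set w : ℝ := Θ⁻¹ i i with hwdef
  have hw : 0 < w := by
    simpa using hpd.inv.dotProduct_mulVec_pos (x := Pi.single i 1)
      (by simp [funext_iff]; exact ⟨i, by simp⟩)
  have hΘii : 0 < Θ i i := by
    simpa using hpd.dotProduct_mulVec_pos (x := Pi.single i 1)
      (by simp [funext_iff]; exact ⟨i, by simp⟩)
  have hq := glasso_quad_bound p Θ hpd i w hwdef.symm hw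
  set g : ℝ → ℝ := fun t => -Real.log (1 + t * w) + t * (S i i + lam) with hg
  set δ : ℝ := min (Θ i i) (1 / w) with hδ
  have hδ0 : 0 < δ := lt_min hΘii (by positivity)
  have hmin0 : IsLocalMin g 0 := by
    rw [IsLocalMin, IsMinFilter, Metric.eventually_nhds_iff]
    refine ⟨δ / 2, by positivity, fun t ht => ?_⟩
    rw [Real.dist_eq, sub_zero] at ht
    have habs_t : |t| < δ / 2 := ht
    have ht1 : 0 < 1 + t * w := by
      have h1 : |t| * w < (1 / w) * w / 2 := by
        have : |t| < (1/w) / 2 := lt_of_lt_of_le habs_t (by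
          have := min_le_right (Θ i i) (1/w); rw [← hδ] at this; linarith)
        nlinarith
      rw [one_div_mul_cancel hw.ne'] at h1
      have := neg_abs_le t
      nlinarith [abs_nonneg t]
    have ht2 : 0 < Θ i i + t := by
      have : |t| < Θ i i := lt_of_lt_of_le habs_t (by
        have := min_le_left (Θ i i) (1/w); rw [← hδ] at this; linarith)
      have := neg_abs_le t
      linarith
    have hpdt := glasso_pert_posdef p Θ hpd i w t ht1 hq
    have hle := hmin _ hpdt
    rw [glassoObj, glassoObj, glasso_pert_det p Θ hpd i w hwdef.symm t,
      glasso_pert_trace, glasso_pert_abs,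
      Real.log_mul hdet.ne' ht1.ne'] at hle
    have habs1 : |Θ i i + t| = Θ i i + t := abs_of_pos ht2
    have habs2 : |Θ i i| = Θ i i := abs_of_pos hΘii
    rw [habs1, habs2] at hle
    have hg0 : g 0 = 0 := by simp [hg]
    have hgt : g t = -Real.log (1 + t * w) + t * (S i i + lam) := rfl
    rw [hg0, hgt]
    nlinarith [hle]
  have hd1 : HasDerivAt (fun t : ℝ => 1 + t * w) w 0 := by
    simpa using ((hasDerivAt_id (0:ℝ)).mul_const w).const_add 1
  have hd2 : HasDerivAt (fun t : ℝ => Real.log (1 + t * w)) w 0 := by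
    have := hd1.log (by norm_num)
    simpa using this
  have hd : HasDerivAt g (-w + 1 * (S i i + lam)) 0 :=
    hd2.neg.add ((hasDerivAt_id (0:ℝ)).mul_const (S i i + lam))
  have := hmin0.hasDerivAt_eq_zero hd
  have : w = S i i + lam := by linarith [this]
  simpa [hwdef] using this
end

section
/- Let λ > 0 and let Θ̂ be a symmetric positive definite p×p real matrix. Suppose there exists a p×p real matrix Z with |Z_ij| ≤ 1 for all i, j, with Z_ij = 1 whenever Θ̂_ij > 0 and Z_ij = −1 whenever Θ̂_ij < 0, such that Θ̂⁻¹ = S + λ·Z. Then Θ̂ is a graphical lasso solution at λ for S, i.e., Θ̂ minimizes f(Θ) = −log det(Θ) + tr(S·Θ) + λ·∑_{i,j} |Θ_ij| over all symmetric positive definite p×p real matrices Θ. -/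
open Matrix

/-- The trace of a hermitian real matrix is the sum of its eigenvalues. -/
private lemma trace_eq_sum_eig {m : ℕ} {A : Matrix (Fin m) (Fin m) ℝ} (hA : A.IsHermitian) :
    A.trace = ∑ i, hA.eigenvalues i := by
  rw [hA.trace_eq_sum_eigenvalues]
  simp

/-- For a positive definite real matrix, `log det A ≤ tr A - m`. -/
private lemma log_det_le_trace {m : ℕ} {A : Matrix (Fin m) (Fin m) ℝ} (hA : A.PosDef) :
    Real.log A.det ≤ A.trace - m := by
  have hdet : A.det = ∏ i, hA.1.eigenvalues i := by
    rw [hA.1.det_eq_prod_eigenvalues]; simp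
  have hpos := hA.eigenvalues_pos
  rw [hdet, Real.log_prod (fun i _ => (hpos i).ne'), trace_eq_sum_eig hA.1]
  have : ∀ i ∈ Finset.univ, Real.log (hA.1.eigenvalues i) ≤ hA.1.eigenvalues i - 1 :=
    fun i _ => Real.log_le_sub_one_of_pos (hpos i)
  calc ∑ i, Real.log (hA.1.eigenvalues i) ≤ ∑ i, (hA.1.eigenvalues i - 1) :=
        Finset.sum_le_sum this
    _ = (∑ i, hA.1.eigenvalues i) - m := by
        rw [Finset.sum_sub_distrib]; simp

/-- Congruence by an invertible matrix preserves positive definiteness. -/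
private lemma posDef_conj {m : ℕ} {A : Matrix (Fin m) (Fin m) ℝ} (hA : A.PosDef)
    {B : Matrix (Fin m) (Fin m) ℝ} (hB : IsUnit B) : (Bᴴ * A * B).PosDef := by
  exact hA.conjTranspose_mul_mul_same (Matrix.mulVec_injective_iff_isUnit.mpr hB)

open scoped MatrixOrder in
/-- Gradient inequality for `log det`: `log det Ψ - log det Θ ≤ tr (Θ⁻¹ Ψ) - m`. -/
private lemma log_det_sub_le {m : ℕ} {Θ Ψ : Matrix (Fin m) (Fin m) ℝ}
    (hΘ : Θ.PosDef) (hΨ : Ψ.PosDef) :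
    Real.log Ψ.det - Real.log Θ.det ≤ (Θ⁻¹ * Ψ).trace - m := by
  have hQ : (Θ⁻¹).PosDef := hΘ.inv
  set R := CFC.sqrt Θ⁻¹ with hRdef
  have hRpsd : R.PosSemidef := (CFC.sqrt_nonneg _).posSemidef
  have hRR : R * R = Θ⁻¹ := CFC.sqrt_mul_sqrt_self _ hQ.posSemidef.nonneg
  have hdetR : R.det * R.det = (Θ⁻¹).det := by rw [← det_mul, hRR]
  have hdetQ : 0 < (Θ⁻¹).det := hQ.det_pos
  have hRunit : IsUnit R := by
    rw [isUnit_iff_isUnit_det, isUnit_iff_ne_zero]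
    intro h; rw [h, mul_zero] at hdetR; exact hdetQ.ne' hdetR.symm
  have hRH : Rᴴ = R := hRpsd.1
  have hApd : (R * Ψ * R).PosDef := by
    have := posDef_conj hΨ hRunit
    rwa [hRH] at this
  have hkey := log_det_le_trace hApd
  have htr : (R * Ψ * R).trace = (Θ⁻¹ * Ψ).trace := by
    rw [trace_mul_cycle, hRR]
  have hdetA : (R * Ψ * R).det = (Θ⁻¹).det * Ψ.det := by
    rw [det_mul, det_mul]; linear_combination Ψ.det * hdetR
  rw [hdetA, htr, Real.log_mul hdetQ.ne' hΨ.det_pos.ne',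
    Matrix.det_nonsing_inv, Ring.inverse_eq_inv, Real.log_inv] at hkey
  linarith [hkey]

/-- sufficiency of the KKT conditions: if there is a subgradient matrix `Z` with
`|Z i j| ≤ 1`, `Z i j = 1` where `Θ i j > 0`, `Z i j = -1` where `Θ i j < 0`, and
`Θ⁻¹ = S + lam • Z`, then `Θ` is a graphical lasso solution at `lam` for `S`. -/
theorem glasso_kkt_sufficient
    (p : ℕ) (hp : 1 ≤ p) (S : Matrix (Fin p) (Fin p) ℝ) (hS : S.PosSemidef)
    (lam : ℝ) (hlam : 0 < lam)
    (Θ : Matrix (Fin p) (Fin p) ℝ) (hΘ : Θ.PosDef)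
    (Z : Matrix (Fin p) (Fin p) ℝ)
    (hZbound : ∀ i j : Fin p, |Z i j| ≤ 1)
    (hZpos : ∀ i j : Fin p, 0 < Θ i j → Z i j = 1)
    (hZneg : ∀ i j : Fin p, Θ i j < 0 → Z i j = -1)
    (hstat : Θ⁻¹ = S + lam • Z) :
    IsGlassoSol lam S Θ := by
  refine ⟨hΘ, fun Ψ hΨ => ?_⟩
  have hdet : Real.log Ψ.det - Real.log Θ.det ≤ (Θ⁻¹ * Ψ).trace - p :=
    log_det_sub_le hΘ hΨ
  have hinv : Θ⁻¹ * Θ = 1 := nonsing_inv_mul Θ hΘ.det_pos.ne'.isUnit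
  have htrΘ : (Θ⁻¹ * Θ).trace = (p : ℝ) := by rw [hinv, trace_one]; simp
  set M := Ψ - Θ with hM
  have hMsymm : ∀ i j, M j i = M i j := by
    intro i j
    have h1 : Ψ j i = Ψ i j := by rw [← hΨ.isHermitian.apply i j]; simp
    have h2 : Θ j i = Θ i j := by rw [← hΘ.isHermitian.apply i j]; simp
    simp [hM, Matrix.sub_apply, h1, h2]
  have htrZ : (Z * M).trace = ∑ i, ∑ j, Z i j * M i j := by
    rw [Matrix.trace]
    refine Finset.sum_congr rfl fun i _ => ?_
    simp only [Matrix.diag_apply, Matrix.mul_apply]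
    exact Finset.sum_congr rfl fun j _ => by rw [hMsymm i j]
  have hsplit : (Θ⁻¹ * M).trace = (S * M).trace + lam * (Z * M).trace := by
    rw [hstat, add_mul, smul_mul_assoc, trace_add, trace_smul, smul_eq_mul]
  have habsΨ : ∑ i, ∑ j, Z i j * Ψ i j ≤ ∑ i, ∑ j, |Ψ i j| := by
    refine Finset.sum_le_sum fun i _ => Finset.sum_le_sum fun j _ => ?_
    calc Z i j * Ψ i j ≤ |Z i j * Ψ i j| := le_abs_self _
      _ = |Z i j| * |Ψ i j| := abs_mul _ _
      _ ≤ 1 * |Ψ i j| := mul_le_mul_of_nonneg_right (hZbound i j) (abs_nonneg _)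
      _ = |Ψ i j| := one_mul _
  have habsΘ : ∑ i, ∑ j, Z i j * Θ i j = ∑ i, ∑ j, |Θ i j| := by
    refine Finset.sum_congr rfl fun i _ => Finset.sum_congr rfl fun j _ => ?_
    rcases lt_trichotomy (Θ i j) 0 with h | h | h
    · rw [hZneg i j h, abs_of_neg h]; ring
    · rw [h, abs_zero, mul_zero]
    · rw [hZpos i j h, abs_of_pos h]; ring
  have hsum : ∑ i, ∑ j, Z i j * M i j
      = (∑ i, ∑ j, Z i j * Ψ i j) - ∑ i, ∑ j, Z i j * Θ i j := by
    rw [← Finset.sum_sub_distrib]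
    refine Finset.sum_congr rfl fun i _ => ?_
    rw [← Finset.sum_sub_distrib]
    exact Finset.sum_congr rfl fun j _ => by simp [hM, Matrix.sub_apply]; ring
  have htrS : (S * M).trace = (S * Ψ).trace - (S * Θ).trace := by
    rw [hM, Matrix.mul_sub, trace_sub]
  have htrI : (Θ⁻¹ * M).trace = (Θ⁻¹ * Ψ).trace - (Θ⁻¹ * Θ).trace := by
    rw [hM, Matrix.mul_sub, trace_sub]
  have hZle : lam * (Z * M).trace ≤ lam * ((∑ i, ∑ j, |Ψ i j|) - ∑ i, ∑ j, |Θ i j|) := by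
    apply mul_le_mul_of_nonneg_left _ hlam.le
    rw [htrZ, hsum, habsΘ]
    linarith [habsΨ]
  simp only [glassoObj]
  linarith [hdet, hsplit, htrS, htrI, htrΘ, hZle]
end
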